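/- arXiv:2007.05247 — 5 statements merged into one kernel-verified Lean document; each statement's English description precedes it below -/
import Mathlib

section
/- Let M be an Orlicz function and φ(α) = log ∫_ℝ exp(α·M(x)) dx for α < 0. Then lim_{α ↑ 0} φ'(α) = +∞ and lim_{α → -∞} φ'(α) = 0. Consequently, for every R ∈ (0, ∞) there exists a unique α* < 0 with φ'(α*) = R. -/
open MeasureTheory Filter

def IsOrlicz (M : ℝ → ℝ) : Prop :=
  ConvexOn ℝ Set.univ M ∧ (∀ t, M (-t) = M t) ∧ M 0 = 0 ∧ ∀ t ≠ 0, 0 < M t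

namespace Stmt5Aux

variable {M : ℝ → ℝ}

lemma M_cont (hM : IsOrlicz M) : Continuous M := by
  have := hM.1.continuousOn isOpen_univ
  rwa [continuousOn_univ] at this

lemma M_nonneg (hM : IsOrlicz M) (t : ℝ) : 0 ≤ M t := by
  rcases eq_or_ne t 0 with h | h
  · simp [h, hM.2.2.1]
  · exact (hM.2.2.2 t h).le

lemma M_mono (hM : IsOrlicz M) {s t : ℝ} (h : |s| ≤ t) : M s ≤ M t := by
  have ht : 0 ≤ t := le_trans (abs_nonneg s) h
  rcases eq_or_lt_of_le ht with h0 | h0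
  · have : s = 0 := by
      have := abs_nonneg s; have : |s| = 0 := le_antisymm (h.trans h0.symm.le) (abs_nonneg s)
      exact abs_eq_zero.mp this
    simp [this, ← h0, hM.2.2.1]
  · -- s = a • (-t) + b • t with a = (t - s)/(2t), b = (t+s)/(2t)
    have habs := abs_le.mp h
    have ha : (0:ℝ) ≤ (t - s) / (2 * t) := div_nonneg (by linarith [habs.2]) (by linarith)
    have hb : (0:ℝ) ≤ (t + s) / (2 * t) := div_nonneg (by linarith [habs.1]) (by linarith)
    have hab : (t - s) / (2 * t) + (t + s) / (2 * t) = 1 := by field_simp; ring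
    have key := hM.1.2 (Set.mem_univ (-t)) (Set.mem_univ t) ha hb hab
    simp only [smul_eq_mul] at key
    have hs : (t - s) / (2 * t) * (-t) + (t + s) / (2 * t) * t = s := by
      field_simp; ring
    rw [hs] at key
    calc M s ≤ (t - s) / (2 * t) * M (-t) + (t + s) / (2 * t) * M t := key
      _ = M t := by rw [hM.2.1]; field_simp; ring

lemma M_lin (hM : IsOrlicz M) (t : ℝ) : M 1 * (|t| - 1) ≤ M t := by
  rcases le_or_gt (|t|) 1 with h | h
  · have h1 : M 1 * (|t| - 1) ≤ 0 :=
      mul_nonpos_of_nonneg_of_nonpos (M_nonneg hM 1) (by linarith)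
    exact h1.trans (M_nonneg hM t)
  · have habs : M t = M (|t|) := by
      rcases abs_choice t with h' | h'
      · rw [h']
      · rw [h', hM.2.1]
    have ht : (0:ℝ) < |t| := lt_trans one_pos h
    -- 1 = (1/|t|) • |t| + (1 - 1/|t|) • 0
    have ha : (0:ℝ) ≤ 1 / |t| := by positivity
    have hb : (0:ℝ) ≤ 1 - 1 / |t| := by rw [sub_nonneg, div_le_one ht]; exact h.le
    have hab : 1 / |t| + (1 - 1 / |t|) = 1 := by ring
    have key := hM.1.2 (Set.mem_univ (|t|)) (Set.mem_univ 0) ha hb hab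
    simp only [smul_eq_mul] at key
    have h1 : (1:ℝ) / |t| * |t| + (1 - 1 / |t|) * (0:ℝ) = 1 := by
      field_simp; ring
    rw [h1, hM.2.2.1, mul_zero, add_zero] at key
    have : M 1 * |t| ≤ M (|t|) := by
      rw [mul_comm]
      calc |t| * M 1 ≤ |t| * (1 / |t| * M (|t|)) := by
            exact mul_le_mul_of_nonneg_left key ht.le
        _ = M (|t|) := by field_simp
    rw [habs]
    nlinarith [M_nonneg hM 1]

end Stmt5Aux

namespace Stmt5Aux

lemma integrable_exp_neg_abs {c : ℝ} (hc : 0 < c) :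
    Integrable fun x : ℝ => Real.exp (-c * |x|) := by
  have h1 : IntegrableOn (fun x : ℝ => Real.exp (-c * |x|)) (Set.Ioi 0) := by
    refine (exp_neg_integrableOn_Ioi 0 hc).congr_fun (fun x hx => ?_) measurableSet_Ioi
    rw [abs_of_pos hx]
  have h2 : IntegrableOn (fun x : ℝ => Real.exp (-c * |x|)) (Set.Iio 0) := by
    have heq : (fun x : ℝ => Real.exp (-c * |x|)) ∘ (fun x : ℝ => -x)
        = fun x : ℝ => Real.exp (-c * |x|) := by
      funext x; simp [Function.comp, abs_neg]
    have hpre : (fun x : ℝ => -x) ⁻¹' (Set.Ioi 0) = Set.Iio 0 := by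
      ext x; simp
    have := (MeasurePreserving.integrableOn_comp_preimage
      (Measure.measurePreserving_neg (volume : Measure ℝ))
      (Homeomorph.neg ℝ).measurableEmbedding).2 h1
    rwa [heq, hpre] at this
  rw [← integrableOn_univ, ← Set.Iio_union_Ici (a := (0:ℝ))]
  refine h2.union ?_
  rwa [integrableOn_Ici_iff_integrableOn_Ioi]

lemma pow_le_exp_aux {β t : ℝ} (hβ : 0 < β) (ht : 0 ≤ t) (n : ℕ) :
    t ^ n ≤ n.factorial * (2 / β) ^ n * Real.exp (β / 2 * t) := by
  have h := Real.pow_div_factorial_le_exp (x := β / 2 * t)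
    (mul_nonneg (by linarith) ht) n
  have hfac : (0:ℝ) < n.factorial := Nat.cast_pos.mpr n.factorial_pos
  rw [div_le_iff₀ hfac] at h
  have h2 : (0:ℝ) < 2 / β := div_pos two_pos hβ
  calc t ^ n = (2 / β * (β / 2 * t)) ^ n := by congr 1; field_simp
    _ = (2 / β) ^ n * (β / 2 * t) ^ n := mul_pow _ _ _
    _ ≤ (2 / β) ^ n * (Real.exp (β / 2 * t) * n.factorial) :=
        mul_le_mul_of_nonneg_left h (le_of_lt (pow_pos h2 n))
    _ = n.factorial * (2 / β) ^ n * Real.exp (β / 2 * t) := by ring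

lemma integrable_pow_exp (hM : IsOrlicz M) {α : ℝ} (hα : α < 0) (n : ℕ) :
    Integrable fun x : ℝ => (M x) ^ n * Real.exp (α * M x) := by
  have hM1 : 0 < M 1 := hM.2.2.2 1 one_ne_zero
  set β : ℝ := -α with hβdef
  have hβ : 0 < β := by simp [hβdef]; linarith
  set c : ℝ := β / 2 * M 1 with hcdef
  have hcpos : 0 < c := mul_pos (by linarith) hM1
  set K : ℝ := n.factorial * (2 / β) ^ n with hKdef
  have hK : 0 < K := mul_pos (Nat.cast_pos.mpr n.factorial_pos)
    (pow_pos (div_pos two_pos hβ) n)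
  set C : ℝ := K * Real.exp (c) with hCdef
  refine ((integrable_exp_neg_abs hcpos).const_mul C).mono'
    ?_ (Eventually.of_forall fun x => ?_)
  · exact (((M_cont hM).pow n).mul
      (Real.continuous_exp.comp (continuous_const.mul (M_cont hM)))).aestronglyMeasurable
  · have hMx := M_nonneg hM x
    have hlin := M_lin hM x
    rw [Real.norm_eq_abs, abs_of_nonneg (mul_nonneg (pow_nonneg hMx n) (Real.exp_pos _).le)]
    have step1 : (M x) ^ n * Real.exp (α * M x) ≤ K * Real.exp (-(β / 2) * M x) := by
      calc (M x) ^ n * Real.exp (α * M x)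
          ≤ (K * Real.exp (β / 2 * M x)) * Real.exp (α * M x) :=
            mul_le_mul_of_nonneg_right (pow_le_exp_aux hβ hMx n) (Real.exp_pos _).le
        _ = K * Real.exp (-(β / 2) * M x) := by
            rw [mul_assoc, ← Real.exp_add]
            congr 2
            simp only [hβdef]; ring
    have step2 : Real.exp (-(β / 2) * M x) ≤ Real.exp c * Real.exp (-c * |x|) := by
      rw [← Real.exp_add]
      apply Real.exp_le_exp.mpr
      have h1 : -(β / 2) * M x ≤ -(β / 2) * (M 1 * (|x| - 1)) :=
        mul_le_mul_of_nonpos_left hlin (by linarith)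
      calc -(β / 2) * M x ≤ -(β / 2) * (M 1 * (|x| - 1)) := h1
        _ = c + -c * |x| := by simp only [hcdef]; ring
    calc (M x) ^ n * Real.exp (α * M x) ≤ K * Real.exp (-(β / 2) * M x) := step1
      _ ≤ K * (Real.exp c * Real.exp (-c * |x|)) :=
          mul_le_mul_of_nonneg_left step2 hK.le
      _ = C * Real.exp (-c * |x|) := by rw [hCdef]; ring

end Stmt5Aux

namespace Stmt5Aux

lemma cont_pow_exp (hM : IsOrlicz M) (n : ℕ) (α : ℝ) :
    Continuous fun x : ℝ => (M x) ^ n * Real.exp (α * M x) :=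
  ((M_cont hM).pow n).mul (Real.continuous_exp.comp (continuous_const.mul (M_cont hM)))

lemma hasDerivAt_int (hM : IsOrlicz M) {α : ℝ} (hα : α < 0) (n : ℕ) :
    HasDerivAt (fun a => ∫ x : ℝ, (M x) ^ n * Real.exp (a * M x))
      (∫ x : ℝ, (M x) ^ (n + 1) * Real.exp (α * M x)) α := by
  have hhalf : α / 2 < 0 := by linarith
  have key := hasDerivAt_integral_of_dominated_loc_of_deriv_le
    (F := fun (a : ℝ) (x : ℝ) => (M x) ^ n * Real.exp (a * M x))
    (F' := fun (a : ℝ) (x : ℝ) => (M x) ^ (n + 1) * Real.exp (a * M x))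
    (x₀ := α) (s := Metric.ball α (-α / 2))
    (bound := fun x : ℝ => (M x) ^ (n + 1) * Real.exp (α / 2 * M x))
    (Metric.ball_mem_nhds α (by linarith : (0:ℝ) < -α / 2))
    (Eventually.of_forall fun a => (cont_pow_exp hM n a).aestronglyMeasurable)
    (integrable_pow_exp hM hα n)
    ((cont_pow_exp hM (n+1) α).aestronglyMeasurable)
    (Eventually.of_forall fun x a ha => ?_)
    (integrable_pow_exp hM hhalf (n + 1))
    (Eventually.of_forall fun x a ha => ?_)
  · exact key.2
  · -- bound on ball
    have hx := M_nonneg hM x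
    have ha' : a < α / 2 := by
      have := abs_lt.mp (mem_ball_iff_norm.mp ha)
      have h2 := this.2
      linarith [this.1, this.2]
    rw [Real.norm_eq_abs, abs_of_nonneg (mul_nonneg (pow_nonneg hx _) (Real.exp_pos _).le)]
    apply mul_le_mul_of_nonneg_left _ (pow_nonneg hx _)
    exact Real.exp_le_exp.mpr (mul_le_mul_of_nonneg_right ha'.le hx)
  · -- HasDerivAt in a
    have h1 : HasDerivAt (fun b : ℝ => b * M x) (M x) a := by
      simpa using (hasDerivAt_id a).mul_const (M x)
    have h2 := (h1.exp).const_mul ((M x) ^ n)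
    refine h2.congr_deriv ?_
    ring

lemma Z_pos (hM : IsOrlicz M) {α : ℝ} (hα : α < 0) :
    0 < ∫ x : ℝ, Real.exp (α * M x) := by
  have hint : Integrable fun x : ℝ => Real.exp (α * M x) := by
    have := integrable_pow_exp hM hα 0
    simpa using this
  rw [integral_pos_iff_support_of_nonneg (fun x => (Real.exp_pos _).le) hint]
  have : Function.support (fun x : ℝ => Real.exp (α * M x)) = Set.univ := by
    ext x; simp [Function.support, (Real.exp_pos (α * M x)).ne']
  rw [this]
  simp

end Stmt5Aux

namespace Stmt5Aux

lemma integrable_exp' (hM : IsOrlicz M) {α : ℝ} (hα : α < 0) :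
    Integrable fun x : ℝ => Real.exp (α * M x) := by
  simpa using integrable_pow_exp hM hα 0

lemma integrable_mul_exp (hM : IsOrlicz M) {α : ℝ} (hα : α < 0) :
    Integrable fun x : ℝ => M x * Real.exp (α * M x) := by
  simpa using integrable_pow_exp hM hα 1

lemma phi_hasDeriv (hM : IsOrlicz M) {φ : ℝ → ℝ}
    (hφ : ∀ α, φ α = Real.log (∫ x : ℝ, Real.exp (α * M x))) {α : ℝ} (hα : α < 0) :
    HasDerivAt φ
      ((∫ x : ℝ, M x * Real.exp (α * M x)) / (∫ x : ℝ, Real.exp (α * M x))) α := by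
  have h0 := hasDerivAt_int hM hα 0
  have e1 : (fun a : ℝ => ∫ x : ℝ, (M x) ^ 0 * Real.exp (a * M x))
      = fun a : ℝ => ∫ x : ℝ, Real.exp (a * M x) := by
    funext a; simp
  have e2 : (∫ x : ℝ, (M x) ^ (0 + 1) * Real.exp (α * M x))
      = ∫ x : ℝ, M x * Real.exp (α * M x) := by simp
  rw [e1, e2] at h0
  have hZ : (∫ x : ℝ, Real.exp (α * M x)) ≠ 0 := (Z_pos hM hα).ne'
  have hlog := (Real.hasDerivAt_log hZ).comp α h0
  have hfun : φ = Real.log ∘ fun a : ℝ => ∫ x : ℝ, Real.exp (a * M x) := by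
    funext a; exact hφ a
  rw [hfun]
  refine hlog.congr_deriv ?_
  ring

lemma deriv_phi_eq (hM : IsOrlicz M) {φ : ℝ → ℝ}
    (hφ : ∀ α, φ α = Real.log (∫ x : ℝ, Real.exp (α * M x))) {α : ℝ} (hα : α < 0) :
    deriv φ α
      = (∫ x : ℝ, M x * Real.exp (α * M x)) / (∫ x : ℝ, Real.exp (α * M x)) :=
  (phi_hasDeriv hM hφ hα).deriv

lemma Z_lower (hM : IsOrlicz M) {α : ℝ} (hα : α < 0) {T : ℝ} (hT : 0 < T) :
    2 * T * Real.exp (α * M T) ≤ ∫ x : ℝ, Real.exp (α * M x) := by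
  have hint := integrable_exp' hM hα
  have h1 : 2 * T * Real.exp (α * M T)
      = ∫ _x in Set.Icc (-T) T, Real.exp (α * M T) := by
    rw [setIntegral_const, Real.volume_real_Icc, smul_eq_mul,
      max_eq_left (by linarith)]
    ring
  rw [h1]
  calc (∫ _x in Set.Icc (-T) T, Real.exp (α * M T))
      ≤ ∫ x in Set.Icc (-T) T, Real.exp (α * M x) := by
        refine setIntegral_mono_on
          (integrableOn_const measure_Icc_lt_top.ne)
          hint.integrableOn measurableSet_Icc (fun x hx => ?_)
        apply Real.exp_le_exp.mpr
        apply mul_le_mul_of_nonpos_left _ hα.le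
        exact M_mono hM (abs_le.mpr ⟨hx.1, hx.2⟩)
    _ ≤ ∫ x : ℝ, Real.exp (α * M x) :=
        setIntegral_le_integral hint (Eventually.of_forall fun x => (Real.exp_pos _).le)

end Stmt5Aux

namespace Stmt5Aux

lemma part1 (hM : IsOrlicz M) {φ : ℝ → ℝ}
    (hφ : ∀ α, φ α = Real.log (∫ x : ℝ, Real.exp (α * M x))) :
    Tendsto (deriv φ) (nhdsWithin 0 (Set.Iio (0 : ℝ))) atTop := by
  have hM1 : 0 < M 1 := hM.2.2.2 1 one_ne_zero
  rw [tendsto_atTop]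
  intro K
  set B : ℝ := 2 * max K 1 with hBdef
  have hB : 0 < B := by
    have : (1:ℝ) ≤ max K 1 := le_max_right K 1
    rw [hBdef]; linarith
  set L : ℝ := 2 * (B / M 1 + 1) with hLdef
  have hL : 0 < L := by
    have : 0 < B / M 1 := div_pos hB hM1
    rw [hLdef]; linarith
  set T : ℝ := max (2 * L) 1 with hTdef
  have hT : 0 < T := lt_of_lt_of_le one_pos (le_max_right _ 1)
  have hMT : 0 < M T := hM.2.2.2 T hT.ne'
  have ha0 : -(Real.log 2 / M T) < 0 := by
    have : 0 < Real.log 2 / M T := div_pos (Real.log_pos one_lt_two) hMT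
    linarith
  filter_upwards [Ioo_mem_nhdsLT_of_mem
    (Set.mem_Ioc.mpr ⟨ha0, le_refl (0:ℝ)⟩)] with α hαIoo
  obtain ⟨hα1, hα2⟩ := hαIoo
  have hα : α < 0 := hα2
  set Z : ℝ := ∫ x : ℝ, Real.exp (α * M x) with hZdef
  set W : ℝ := ∫ x : ℝ, M x * Real.exp (α * M x) with hWdef
  have hZpos : 0 < Z := Z_pos hM hα
  -- Z is large
  have hexp : (2:ℝ)⁻¹ ≤ Real.exp (α * M T) := by
    have h1 : -Real.log 2 ≤ α * M T := by
      have : -(Real.log 2 / M T) * M T ≤ α * M T :=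
        mul_le_mul_of_nonneg_right hα1.le hMT.le
      calc -Real.log 2 = -(Real.log 2 / M T) * M T := by field_simp
        _ ≤ α * M T := this
    calc (2:ℝ)⁻¹ = Real.exp (-Real.log 2) := by
          rw [Real.exp_neg, Real.exp_log two_pos]
      _ ≤ Real.exp (α * M T) := Real.exp_le_exp.mpr h1
  have hZbig : 2 * L ≤ Z := by
    have h1 := Z_lower hM hα hT
    have h2 : 2 * L ≤ T := le_max_left _ 1
    have h3 : T ≤ 2 * T * Real.exp (α * M T) := by
      have := mul_le_mul_of_nonneg_left hexp (by linarith : (0:ℝ) ≤ 2 * T)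
      calc T = 2 * T * 2⁻¹ := by ring
        _ ≤ 2 * T * Real.exp (α * M T) := this
    linarith
  -- small set
  set s : Set ℝ := {x | M x < B} with hsdef
  have hsopen : IsOpen s := isOpen_lt (M_cont hM) continuous_const
  have hsmeas : MeasurableSet s := hsopen.measurableSet
  have hsvol : volume s ≤ ENNReal.ofReal L := by
    have hsub : s ⊆ Set.Icc (-(B / M 1 + 1)) (B / M 1 + 1) := by
      intro x hx
      have hlin := M_lin hM x
      have : M 1 * (|x| - 1) < B := lt_of_le_of_lt hlin hx
      have habs : |x| ≤ B / M 1 + 1 := by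
        rw [← sub_le_iff_le_add, le_div_iff₀' hM1]
        linarith
      exact abs_le.mp habs
    calc volume s ≤ volume (Set.Icc (-(B / M 1 + 1)) (B / M 1 + 1)) :=
          measure_mono hsub
      _ = ENNReal.ofReal L := by
          rw [Real.volume_Icc, hLdef]; congr 1; ring
  have hsint : (∫ x in s, Real.exp (α * M x)) ≤ L := by
    have hfin : volume s < ⊤ := lt_of_le_of_lt hsvol ENNReal.ofReal_lt_top
    calc (∫ x in s, Real.exp (α * M x)) ≤ ∫ _x in s, (1:ℝ) := by
          refine setIntegral_mono_on ((integrable_exp' hM hα).integrableOn)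
            (integrableOn_const hfin.ne) hsmeas (fun x _ => ?_)
          rw [← Real.exp_zero]
          exact Real.exp_le_exp.mpr (mul_nonpos_of_nonpos_of_nonneg hα.le (M_nonneg hM x))
      _ = (volume s).toReal := by rw [setIntegral_const, smul_eq_mul, mul_one]; rfl
      _ ≤ L := ENNReal.toReal_le_of_le_ofReal hL.le hsvol
  have hcompl : (∫ x in sᶜ, Real.exp (α * M x)) = Z - ∫ x in s, Real.exp (α * M x) := by
    have := integral_add_compl hsmeas (integrable_exp' hM hα)
    rw [hZdef]; linarith [this]
  have hcompl_ge : Z / 2 ≤ ∫ x in sᶜ, Real.exp (α * M x) := by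
    rw [hcompl]; linarith
  have hW : B * (Z / 2) ≤ W := by
    have h1 : (∫ x in sᶜ, M x * Real.exp (α * M x)) ≤ W :=
      setIntegral_le_integral (integrable_mul_exp hM hα)
        (Eventually.of_forall fun x =>
          mul_nonneg (M_nonneg hM x) (Real.exp_pos _).le)
    have h2 : B * ∫ x in sᶜ, Real.exp (α * M x)
        ≤ ∫ x in sᶜ, M x * Real.exp (α * M x) := by
      rw [← integral_const_mul]
      refine setIntegral_mono_on
        (((integrable_exp' hM hα).const_mul B).integrableOn)
        ((integrable_mul_exp hM hα).integrableOn) hsmeas.compl (fun x hx => ?_)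
      have hxB : B ≤ M x := not_lt.mp hx
      exact mul_le_mul_of_nonneg_right hxB (Real.exp_pos _).le
    have h3 : B * (Z / 2) ≤ B * ∫ x in sᶜ, Real.exp (α * M x) :=
      mul_le_mul_of_nonneg_left hcompl_ge hB.le
    linarith
  have hKB : K ≤ B / 2 := by
    rw [hBdef]
    have := le_max_left K 1
    linarith
  rw [deriv_phi_eq hM hφ hα, ← hZdef, ← hWdef]
  refine hKB.trans ?_
  rw [le_div_iff₀ hZpos]
  calc B / 2 * Z = B * (Z / 2) := by ring
    _ ≤ W := hW

end Stmt5Aux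

namespace Stmt5Aux

lemma part2 (hM : IsOrlicz M) {φ : ℝ → ℝ}
    (hφ : ∀ α, φ α = Real.log (∫ x : ℝ, Real.exp (α * M x))) :
    Tendsto (deriv φ) atBot (nhds (0 : ℝ)) := by
  rw [NormedAddCommGroup.tendsto_nhds_zero]
  intro ε hε
  set ε' : ℝ := ε / 4 with hε'def
  have hε' : 0 < ε' := by rw [hε'def]; linarith
  -- choose δ
  obtain ⟨δ₀, hδ₀pos, hδ₀⟩ := Metric.continuousAt_iff.mp (M_cont hM).continuousAt
    (ε' / 2) (by linarith)
  set δ : ℝ := δ₀ / 2 with hδdef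
  have hδpos : 0 < δ := by rw [hδdef]; linarith
  have hMδ : M δ ≤ ε' / 2 := by
    have h1 : dist δ 0 < δ₀ := by
      rw [Real.dist_eq, sub_zero, abs_of_pos hδpos, hδdef]; linarith
    have h2 := hδ₀ h1
    rw [Real.dist_eq, hM.2.2.1, sub_zero, abs_of_nonneg (M_nonneg hM δ)] at h2
    linarith
  set C : ℝ := ∫ x : ℝ, M x * Real.exp (-1 * M x) with hCdef
  have hC : 0 ≤ C :=
    integral_nonneg fun x => mul_nonneg (M_nonneg hM x) (Real.exp_pos _).le
  set coef : ℝ := C * Real.exp ε' / (2 * δ) with hcoefdef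
  have hcoef : 0 ≤ coef := by positivity
  have hexp0 : Tendsto (fun α : ℝ => coef * Real.exp (α * (ε' / 2))) atBot (nhds 0) := by
    have h1 : Tendsto (fun α : ℝ => α * (ε' / 2)) atBot atBot :=
      tendsto_id.atBot_mul_const (by linarith)
    have h2 := Real.tendsto_exp_atBot.comp h1
    have := h2.const_mul coef
    simpa using this
  filter_upwards [eventually_le_atBot (-1 : ℝ),
    hexp0.eventually_lt_const hε'] with α hα1 hsmall
  have hα : α < 0 := lt_of_le_of_lt hα1 (by norm_num)
  set Z : ℝ := ∫ x : ℝ, Real.exp (α * M x) with hZdef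
  set W : ℝ := ∫ x : ℝ, M x * Real.exp (α * M x) with hWdef
  have hZpos : 0 < Z := Z_pos hM hα
  have hWnonneg : 0 ≤ W :=
    integral_nonneg fun x => mul_nonneg (M_nonneg hM x) (Real.exp_pos _).le
  set u : Set ℝ := {x | M x ≤ ε'} with hudef
  have humeas : MeasurableSet u := (isClosed_le (M_cont hM) continuous_const).measurableSet
  have h1 : (∫ x in u, M x * Real.exp (α * M x)) ≤ ε' * Z := by
    calc (∫ x in u, M x * Real.exp (α * M x))
        ≤ ∫ x in u, ε' * Real.exp (α * M x) := by
          refine setIntegral_mono_on ((integrable_mul_exp hM hα).integrableOn)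
            (((integrable_exp' hM hα).const_mul ε').integrableOn) humeas
            (fun x hx => mul_le_mul_of_nonneg_right hx (Real.exp_pos _).le)
      _ = ε' * ∫ x in u, Real.exp (α * M x) := integral_const_mul ε' _
      _ ≤ ε' * Z := by
          refine mul_le_mul_of_nonneg_left ?_ hε'.le
          exact setIntegral_le_integral (integrable_exp' hM hα)
            (Eventually.of_forall fun x => (Real.exp_pos _).le)
  set X : ℝ := Real.exp ((α + 1) * ε') * C with hXdef
  have h2 : (∫ x in uᶜ, M x * Real.exp (α * M x)) ≤ X := by
    calc (∫ x in uᶜ, M x * Real.exp (α * M x))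
        ≤ ∫ x in uᶜ, Real.exp ((α + 1) * ε') * (M x * Real.exp (-1 * M x)) := by
          refine setIntegral_mono_on ((integrable_mul_exp hM hα).integrableOn)
            (((integrable_mul_exp hM (by norm_num : (-1:ℝ) < 0)).const_mul
              (Real.exp ((α + 1) * ε'))).integrableOn) humeas.compl
            (fun x hx => ?_)
          have hxε : ε' < M x := not_le.mp hx
          have key : M x * Real.exp (α * M x)
              = (M x * Real.exp (-1 * M x)) * Real.exp ((α + 1) * M x) := by
            rw [mul_assoc, ← Real.exp_add]
            congr 2
            ring
          rw [key]
          rw [mul_comm (Real.exp ((α + 1) * ε'))]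
          refine mul_le_mul_of_nonneg_left ?_
            (mul_nonneg (M_nonneg hM x) (Real.exp_pos _).le)
          refine Real.exp_le_exp.mpr ?_
          have hα1' : α + 1 ≤ 0 := by linarith
          nlinarith
      _ ≤ Real.exp ((α + 1) * ε') * ∫ x : ℝ, M x * Real.exp (-1 * M x) := by
          rw [← integral_const_mul]
          refine setIntegral_le_integral
            ((integrable_mul_exp hM (by norm_num : (-1:ℝ) < 0)).const_mul _)
            (Eventually.of_forall fun x => ?_)
          exact mul_nonneg (Real.exp_pos _).le
            (mul_nonneg (M_nonneg hM x) (Real.exp_pos _).le)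
      _ = X := rfl
  have hX : 0 ≤ X := mul_nonneg (Real.exp_pos _).le hC
  have hWsplit : W = (∫ x in u, M x * Real.exp (α * M x))
      + ∫ x in uᶜ, M x * Real.exp (α * M x) :=
    (integral_add_compl humeas (integrable_mul_exp hM hα)).symm
  have hWle : W ≤ ε' * Z + X := by rw [hWsplit]; linarith
  -- lower bound on Z
  have hZlow : 2 * δ * Real.exp (α * (ε' / 2)) ≤ Z := by
    have h3 := Z_lower hM hα hδpos
    have h4 : Real.exp (α * M δ) ≥ Real.exp (α * (ε' / 2)) := by
      apply Real.exp_le_exp.mpr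
      exact mul_le_mul_of_nonpos_left hMδ hα.le
    have h5 : 2 * δ * Real.exp (α * (ε' / 2)) ≤ 2 * δ * Real.exp (α * M δ) :=
      mul_le_mul_of_nonneg_left h4 (by linarith)
    linarith
  have hdenom : 0 < 2 * δ * Real.exp (α * (ε' / 2)) := by positivity
  have hratio : W / Z ≤ ε' + coef * Real.exp (α * (ε' / 2)) := by
    have step1 : W / Z ≤ ε' + X / Z := by
      rw [div_le_iff₀ hZpos]
      calc W ≤ ε' * Z + X := hWle
        _ = (ε' + X / Z) * Z := by field_simp
    have step2 : X / Z ≤ X / (2 * δ * Real.exp (α * (ε' / 2))) :=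
      div_le_div_of_nonneg_left hX hdenom hZlow
    have step3 : X / (2 * δ * Real.exp (α * (ε' / 2)))
        = coef * Real.exp (α * (ε' / 2)) := by
      rw [div_eq_iff hdenom.ne', hXdef, hcoefdef]
      have e : Real.exp (α * (ε'/2)) * Real.exp (α * (ε'/2)) * Real.exp ε'
          = Real.exp ((α + 1) * ε') := by
        rw [← Real.exp_add, ← Real.exp_add]; congr 1; ring
      rw [← e]
      field_simp
    linarith
  have hderiv : deriv φ α = W / Z := deriv_phi_eq hM hφ hα
  rw [hderiv, Real.norm_eq_abs, abs_of_nonneg (div_nonneg hWnonneg hZpos.le)]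
  have : W / Z ≤ ε' + ε' := by linarith
  rw [hε'def] at this
  linarith

end Stmt5Aux

namespace Stmt5Aux

lemma M_lt_of_lt (hM : IsOrlicz M) {a b : ℝ} (ha : 0 < a) (hab : a < b) {R : ℝ}
    (hR : 0 < R) (hMb : M b = R) : M a < R := by
  have hb : 0 < b := lt_trans ha hab
  have h1 : (0:ℝ) ≤ a / b := div_nonneg ha.le hb.le
  have h2 : (0:ℝ) ≤ 1 - a / b := by
    rw [sub_nonneg, div_le_one hb]; exact hab.le
  have h3 : a / b + (1 - a / b) = 1 := by ring
  have key := hM.1.2 (Set.mem_univ b) (Set.mem_univ 0) h1 h2 h3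
  simp only [smul_eq_mul, mul_zero, hM.2.2.1, add_zero] at key
  have hab' : a / b * b = a := div_mul_cancel₀ a hb.ne'
  rw [hab', hMb] at key
  have hlt : a / b < 1 := (div_lt_one hb).mpr hab
  calc M a ≤ a / b * R := key
    _ < 1 * R := by exact mul_lt_mul_of_pos_right hlt hR
    _ = R := one_mul R

lemma M_eq_null (hM : IsOrlicz M) {R : ℝ} (hR : 0 < R) :
    volume {x : ℝ | M x = R} = 0 := by
  set P : Set ℝ := {x : ℝ | 0 < x ∧ M x = R} with hPdef
  have hPsub : P.Subsingleton := by
    intro a ha b hb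
    rcases lt_trichotomy a b with h | h | h
    · exact absurd (M_lt_of_lt hM ha.1 h hR hb.2) (by rw [ha.2]; exact lt_irrefl R)
    · exact h
    · exact absurd (M_lt_of_lt hM hb.1 h hR ha.2) (by rw [hb.2]; exact lt_irrefl R)
  have hsub : {x : ℝ | M x = R} ⊆ P ∪ (Neg.neg '' P) := by
    intro x hx
    rcases lt_trichotomy x 0 with h | h | h
    · right
      refine ⟨-x, ⟨by linarith, ?_⟩, by simp⟩
      rw [hM.2.1]; exact hx
    · exfalso
      rw [Set.mem_setOf_eq, h, hM.2.2.1] at hx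
      linarith
    · exact Or.inl ⟨h, hx⟩
  have hcount : (P ∪ (Neg.neg '' P)).Countable :=
    (hPsub.countable).union ((hPsub.countable).image _)
  exact measure_mono_null hsub (hcount.measure_zero _)

lemma int_sq_pos (hM : IsOrlicz M) {α R : ℝ} (hα : α < 0) (hR : 0 < R) :
    0 < ∫ x : ℝ, (M x - R) ^ 2 * Real.exp (α * M x) := by
  have hint : Integrable fun x : ℝ => (M x - R) ^ 2 * Real.exp (α * M x) := by
    have heq : (fun x : ℝ => (M x - R) ^ 2 * Real.exp (α * M x))
        = fun x : ℝ => ((M x) ^ 2 * Real.exp (α * M x)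
            - 2 * R * (M x * Real.exp (α * M x)))
            + R ^ 2 * Real.exp (α * M x) := by
      funext x; ring
    rw [heq]
    exact ((integrable_pow_exp hM hα 2).sub
      ((integrable_mul_exp hM hα).const_mul (2 * R))).add
      ((integrable_exp' hM hα).const_mul (R ^ 2))
  rw [integral_pos_iff_support_of_nonneg
    (fun x => mul_nonneg (sq_nonneg _) (Real.exp_pos _).le) hint]
  have hsupp : {x : ℝ | M x ≠ R}
      ⊆ Function.support fun x : ℝ => (M x - R) ^ 2 * Real.exp (α * M x) := by
    intro x hx
    exact mul_ne_zero (pow_ne_zero _ (sub_ne_zero.mpr hx)) (Real.exp_pos _).ne'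
  by_contra hcon
  push_neg at hcon
  have h0 : volume (Function.support fun x : ℝ => (M x - R) ^ 2 * Real.exp (α * M x)) = 0 :=
    le_antisymm hcon (zero_le)
  have h1 : volume {x : ℝ | M x ≠ R} = 0 := measure_mono_null hsupp h0
  have h2 := M_eq_null hM hR
  have h3 : (volume : Measure ℝ) Set.univ
      ≤ volume {x : ℝ | M x ≠ R} + volume {x : ℝ | M x = R} := by
    refine le_trans (measure_mono ?_) (measure_union_le _ _)
    intro x _
    by_cases hx : M x = R
    · exact Or.inr hx
    · exact Or.inl hx
  rw [h1, h2, add_zero, Real.volume_univ] at h3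
  exact absurd h3 (by simp)

lemma integral_sq_expand (hM : IsOrlicz M) {α R : ℝ} (hα : α < 0) :
    (∫ x : ℝ, (M x - R) ^ 2 * Real.exp (α * M x))
      = (∫ x : ℝ, (M x) ^ 2 * Real.exp (α * M x))
        - 2 * R * (∫ x : ℝ, M x * Real.exp (α * M x))
        + R ^ 2 * ∫ x : ℝ, Real.exp (α * M x) := by
  have heq : (fun x : ℝ => (M x - R) ^ 2 * Real.exp (α * M x))
      = fun x : ℝ => ((M x) ^ 2 * Real.exp (α * M x)
          - 2 * R * (M x * Real.exp (α * M x)))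
          + R ^ 2 * Real.exp (α * M x) := by
    funext x; ring
  have h1 : Integrable (fun x : ℝ => (M x) ^ 2 * Real.exp (α * M x)
      - 2 * R * (M x * Real.exp (α * M x))) volume :=
    (integrable_pow_exp hM hα 2).sub ((integrable_mul_exp hM hα).const_mul (2 * R))
  have h2 : Integrable (fun x : ℝ => R ^ 2 * Real.exp (α * M x)) volume :=
    (integrable_exp' hM hα).const_mul (R ^ 2)
  rw [heq, integral_add h1 h2,
    integral_sub (integrable_pow_exp hM hα 2)
      ((integrable_mul_exp hM hα).const_mul (2 * R)),
    integral_const_mul, integral_const_mul]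

end Stmt5Aux

namespace Stmt5Aux

lemma hasDerivAt_Z (hM : IsOrlicz M) {α : ℝ} (hα : α < 0) :
    HasDerivAt (fun a : ℝ => ∫ x : ℝ, Real.exp (a * M x))
      (∫ x : ℝ, M x * Real.exp (α * M x)) α := by
  have h := hasDerivAt_int hM hα 0
  simp only [pow_zero, one_mul, zero_add, pow_one] at h
  exact h

lemma hasDerivAt_W (hM : IsOrlicz M) {α : ℝ} (hα : α < 0) :
    HasDerivAt (fun a : ℝ => ∫ x : ℝ, M x * Real.exp (a * M x))
      (∫ x : ℝ, (M x) ^ 2 * Real.exp (α * M x)) α := by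
  have h := hasDerivAt_int hM hα 1
  have h12 : (1 : ℕ) + 1 = 2 := rfl
  simp only [pow_one, h12] at h
  exact h

lemma g_hasDeriv (hM : IsOrlicz M) (R : ℝ) {α : ℝ} (hα : α < 0) :
    HasDerivAt (fun a : ℝ => Real.exp (-(a * R))
        * ((∫ x : ℝ, M x * Real.exp (a * M x)) - R * ∫ x : ℝ, Real.exp (a * M x)))
      (Real.exp (-(α * R)) * ∫ x : ℝ, (M x - R) ^ 2 * Real.exp (α * M x)) α := by
  have hE : HasDerivAt (fun a : ℝ => Real.exp (-(a * R)))
      (Real.exp (-(α * R)) * (-R)) α := by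
    have h1 : HasDerivAt (fun a : ℝ => -(a * R)) (-R) α := by
      simpa using ((hasDerivAt_id α).mul_const R).fun_neg
    simpa [mul_comm] using h1.exp
  have hWZ : HasDerivAt
      (fun a : ℝ => (∫ x : ℝ, M x * Real.exp (a * M x)) - R * ∫ x : ℝ, Real.exp (a * M x))
      ((∫ x : ℝ, (M x) ^ 2 * Real.exp (α * M x))
        - R * ∫ x : ℝ, M x * Real.exp (α * M x)) α :=
    (hasDerivAt_W hM hα).sub ((hasDerivAt_Z hM hα).const_mul R)
  have key := hE.mul hWZ
  refine key.congr_deriv ?_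
  rw [integral_sq_expand hM hα]
  ring

lemma g_strictMono (hM : IsOrlicz M) {R : ℝ} (hR : 0 < R) :
    StrictMonoOn (fun a : ℝ => Real.exp (-(a * R))
        * ((∫ x : ℝ, M x * Real.exp (a * M x)) - R * ∫ x : ℝ, Real.exp (a * M x)))
      (Set.Iio (0 : ℝ)) := by
  apply strictMonoOn_of_deriv_pos (convex_Iio (0:ℝ))
  · exact fun a ha => ((g_hasDeriv hM R ha).continuousAt).continuousWithinAt
  · intro a ha
    rw [interior_Iio] at ha
    rw [(g_hasDeriv hM R ha).deriv]
    exact mul_pos (Real.exp_pos _) (int_sq_pos hM ha hR)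

end Stmt5Aux

open Stmt5Aux in
theorem stmt5 (M : ℝ → ℝ) (hM : IsOrlicz M)
    (φ : ℝ → ℝ) (hφ : ∀ α, φ α = Real.log (∫ x : ℝ, Real.exp (α * M x))) :
    Tendsto (deriv φ) (nhdsWithin 0 (Set.Iio (0 : ℝ))) atTop ∧
    Tendsto (deriv φ) atBot (nhds 0) ∧
    ∀ R : ℝ, 0 < R → ∃! α : ℝ, α < 0 ∧ deriv φ α = R := by
  refine ⟨part1 hM hφ, part2 hM hφ, fun R hR => ?_⟩
  -- existence
  have h1 := part1 hM hφ
  have h2 := part2 hM hφ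
  obtain ⟨a, haR, ha⟩ : ∃ a : ℝ, R + 1 ≤ deriv φ a ∧ a < 0 := by
    have ev1 : ∀ᶠ α in nhdsWithin 0 (Set.Iio (0:ℝ)), R + 1 ≤ deriv φ α :=
      h1.eventually_ge_atTop (R + 1)
    have ev2 : ∀ᶠ α in nhdsWithin 0 (Set.Iio (0:ℝ)), α ∈ Set.Iio (0:ℝ) :=
      eventually_mem_nhdsWithin
    exact (ev1.and ev2).exists
  obtain ⟨b, hbR, hba, hb0⟩ : ∃ b : ℝ, deriv φ b < R ∧ b < a ∧ b < 0 := by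
    have ev1 : ∀ᶠ α in atBot, deriv φ α < R := by
      have : ∀ᶠ α in atBot, ‖deriv φ α‖ < R := by
        rw [NormedAddCommGroup.tendsto_nhds_zero] at h2
        exact h2 R hR
      filter_upwards [this] with α hα
      calc deriv φ α ≤ ‖deriv φ α‖ := le_abs_self _
        _ < R := hα
    obtain ⟨b, h⟩ := (ev1.and ((eventually_lt_atBot a).and (eventually_lt_atBot 0))).exists
    exact ⟨b, h.1, h.2.1, h.2.2⟩
  have hcont : ContinuousOn (deriv φ) (Set.Icc b a) := by
    intro t ht
    have htneg : t < 0 := lt_of_le_of_lt ht.2 ha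
    have hZc : ContinuousAt (fun s : ℝ => ∫ x : ℝ, Real.exp (s * M x)) t :=
      (hasDerivAt_Z hM htneg).continuousAt
    have hWc : ContinuousAt (fun s : ℝ => ∫ x : ℝ, M x * Real.exp (s * M x)) t :=
      (hasDerivAt_W hM htneg).continuousAt
    have hr : ContinuousAt (fun s : ℝ =>
        (∫ x : ℝ, M x * Real.exp (s * M x)) / ∫ x : ℝ, Real.exp (s * M x)) t :=
      hWc.div hZc (Z_pos hM htneg).ne'
    have heq : deriv φ =ᶠ[nhds t] fun s : ℝ =>
        (∫ x : ℝ, M x * Real.exp (s * M x)) / ∫ x : ℝ, Real.exp (s * M x) := by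
      filter_upwards [isOpen_Iio.mem_nhds htneg] with s hs
      exact deriv_phi_eq hM hφ hs
    exact (hr.congr heq.symm).continuousWithinAt
  obtain ⟨c, hc, hcR⟩ : ∃ c ∈ Set.Icc b a, deriv φ c = R := by
    have hmem : R ∈ Set.Icc (deriv φ b) (deriv φ a) :=
      ⟨hbR.le, by linarith⟩
    obtain ⟨c, hc, hcR⟩ := intermediate_value_Icc hba.le hcont hmem
    exact ⟨c, hc, hcR⟩
  have hc0 : c < 0 := lt_of_le_of_lt hc.2 ha
  refine ⟨c, ⟨hc0, hcR⟩, fun y hy => ?_⟩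
  -- uniqueness via strict monotonicity of g
  set g : ℝ → ℝ := fun s : ℝ => Real.exp (-(s * R))
      * ((∫ x : ℝ, M x * Real.exp (s * M x)) - R * ∫ x : ℝ, Real.exp (s * M x)) with hgdef
  have gzero : ∀ {β : ℝ}, β < 0 → deriv φ β = R → g β = 0 := by
    intro β hβ hd
    rw [deriv_phi_eq hM hφ hβ, div_eq_iff (Z_pos hM hβ).ne'] at hd
    rw [hgdef]
    simp only
    rw [hd]
    ring
  have hg1 : g y = 0 := gzero hy.1 hy.2
  have hg2 : g c = 0 := gzero hc0 hcR
  exact (g_strictMono hM hR).injOn hy.1 hc0 (hg1.trans hg2.symm)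
end

section
/- Let d ∈ ℕ, R ∈ (0,∞), M an Orlicz function, α* < 0 with φ'(α*) = R, and Y_1, …, Y_d i.i.d. with Y_i = M(Z_i) - R where Z_i has Gibbs density p(x) = exp(α*·M(x) - φ(α*)). Then for every c > 0, vol_d(B_M^d(dR)) ≥ exp(d(φ(α*) - α*R)) · exp(c·α*·√d) · P[(1/√d)∑_{i=1}^d Y_i ∈ [-c, 0]]. -/
open MeasureTheory

open scoped ENNReal

private lemma lintegral_fin_prod : ∀ (n : ℕ) (g : Fin n → ℝ → ℝ≥0∞), (∀ i, Measurable (g i)) →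
    ∫⁻ x : Fin n → ℝ, ∏ i, g i (x i) ∂(Measure.pi fun _ => volume) = ∏ i, ∫⁻ t, g i t := by
  intro n
  induction n with
  | zero => intro g _; simp
  | succ n ih =>
    intro g hg
    have hmp := (measurePreserving_piFinSuccAbove
      (fun _ : Fin (n + 1) => (volume : Measure ℝ)) 0).symm
    rw [← hmp.lintegral_comp_emb (MeasurableEquiv.measurableEmbedding _)]
    simp_rw [MeasurableEquiv.piFinSuccAbove_symm_apply, Fin.insertNthEquiv,
      Fin.prod_univ_succ, Fin.insertNth_zero]
    simp only [Fin.zero_succAbove, Equiv.coe_fn_mk, cast_eq, Fin.cons_zero, Fin.cons_succ]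
    have hmul := lintegral_prod_mul (μ := (volume : Measure ℝ))
      (ν := (Measure.pi fun _ : Fin n => (volume : Measure ℝ)))
      (f := g 0) (g := fun y : Fin n → ℝ => ∏ j, g j.succ (y j))
      (hg 0).aemeasurable
      (Finset.measurable_prod Finset.univ
        (fun j _ => (hg j.succ).comp (measurable_pi_apply j))).aemeasurable
    rw [show (∏ i : Fin n, ∫⁻ t, g i.succ t) =
        ∫⁻ y : Fin n → ℝ, ∏ j, g j.succ (y j) ∂(Measure.pi fun _ => volume) from
      (ih (fun j => g j.succ) (fun j => hg j.succ)).symm]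
    exact hmul

theorem stmt10 {Ω : Type*} [MeasurableSpace Ω] (μ : Measure Ω) [IsProbabilityMeasure μ]
    (d : ℕ) (hd : 0 < d) (R : ℝ) (hR : 0 < R)
    (M : ℝ → ℝ) (hM : IsOrlicz M)
    (φ : ℝ → ℝ) (hφ : ∀ α, φ α = Real.log (∫ x : ℝ, Real.exp (α * M x)))
    (αs : ℝ) (hαs : αs < 0) (hder : deriv φ αs = R)
    (Z : Fin d → Ω → ℝ)
    (hindep : ProbabilityTheory.iIndepFun Z μ)
    (hdist : ∀ i, Measure.map (Z i) μ =
      volume.withDensity fun x => ENNReal.ofReal (Real.exp (αs * M x - φ αs)))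
    (c : ℝ) (hc : 0 < c) :
    Real.exp (d * (φ αs - αs * R)) * Real.exp (c * αs * Real.sqrt d) *
        (μ {ω | (1 / Real.sqrt d) * ∑ i, (M (Z i ω) - R) ∈ Set.Icc (-c) 0}).toReal
      ≤ (volume {x : Fin d → ℝ | ∑ i, M (x i) ≤ d * R}).toReal := by
  obtain ⟨hconv, heven, hzero, hpos⟩ := hM
  have hMcont : Continuous M :=
    continuousOn_univ.mp (hconv.continuousOn isOpen_univ)
  have hMmeas : Measurable M := hMcont.measurable
  set f : ℝ → ℝ≥0∞ := fun x => ENNReal.ofReal (Real.exp (αs * M x - φ αs)) with hfdef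
  have hfmeas : Measurable f :=
    (((hMmeas.const_mul αs).sub measurable_const).exp).ennreal_ofReal
  -- the single-coordinate law is nonzero
  have hγ0 : (volume.withDensity f) Set.univ ≠ 0 := by
    rw [withDensity_apply _ MeasurableSet.univ, setLIntegral_univ]
    refine (lintegral_pos_iff_support hfmeas).mpr ?_ |>.ne'
    have : Function.support f = Set.univ := by
      ext x
      simp [hfdef, Function.mem_support, (ENNReal.ofReal_pos.mpr (Real.exp_pos _)).ne']
    rw [this]
    simp
  have hZae : ∀ i, AEMeasurable (Z i) μ := by
    intro i
    by_contra h
    have h0 := Measure.map_of_not_aemeasurable h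
    rw [hdist i] at h0
    exact hγ0 (by rw [h0]; simp)
  haveI hprob : IsProbabilityMeasure (volume.withDensity f) := by
    rw [← hdist ⟨0, hd⟩]
    exact Measure.isProbabilityMeasure_map (hZae ⟨0, hd⟩)
  set vec : Ω → (Fin d → ℝ) := fun ω i => Z i ω with hvecdef
  have hvec : AEMeasurable vec μ := by
    refine ⟨fun ω i => (hZae i).mk _ ω,
      measurable_pi_lambda _ (fun i => (hZae i).measurable_mk), ?_⟩
    have hall : ∀ᵐ ω ∂μ, ∀ i, Z i ω = (hZae i).mk _ ω :=
      ae_all_iff.mpr fun i => (hZae i).ae_eq_mk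
    filter_upwards [hall] with ω hω
    funext i; exact hω i
  set G : (Fin d → ℝ) → ℝ≥0∞ :=
    fun x => ENNReal.ofReal (Real.exp (αs * ∑ i, M (x i) - d * φ αs)) with hGdef
  have hGf : ∀ x : Fin d → ℝ, G x = ∏ i, f (x i) := by
    intro x
    rw [hGdef]
    simp only [hfdef]
    rw [← ENNReal.ofReal_prod_of_nonneg (fun i _ => (Real.exp_pos _).le), ← Real.exp_sum]
    congr 2
    rw [Finset.sum_sub_distrib, ← Finset.mul_sum]
    simp [mul_comm]
  -- joint law of the vector
  have hrect : ∀ s : Fin d → Set ℝ, (∀ i, MeasurableSet (s i)) →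
      Measure.map vec μ (Set.pi Set.univ s) = ∏ i, (volume.withDensity f) (s i) := by
    intro s hs
    rw [Measure.map_apply_of_aemeasurable hvec (MeasurableSet.univ_pi hs)]
    have hpre : vec ⁻¹' Set.pi Set.univ s = ⋂ i, Z i ⁻¹' s i := by
      ext ω; simp [Set.mem_pi, hvecdef]
    rw [hpre, hindep.meas_iInter (fun i => ⟨s i, hs i, rfl⟩)]
    exact Finset.prod_congr rfl fun i _ => by
      rw [← hdist i, Measure.map_apply_of_aemeasurable (hZae i) (hs i)]
  have hrect2 : ∀ s : Fin d → Set ℝ, (∀ i, MeasurableSet (s i)) →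
      (volume.withDensity G) (Set.pi Set.univ s) = ∏ i, (volume.withDensity f) (s i) := by
    intro s hs
    rw [withDensity_apply _ (MeasurableSet.univ_pi hs),
      ← lintegral_indicator (MeasurableSet.univ_pi hs)]
    have hind : ∀ x : Fin d → ℝ,
        (Set.pi Set.univ s).indicator G x = ∏ i, (s i).indicator f (x i) := by
      intro x
      by_cases hx : x ∈ Set.pi Set.univ s
      · rw [Set.indicator_of_mem hx, hGf]
        exact Finset.prod_congr rfl fun i _ =>
          (Set.indicator_of_mem (hx i (Set.mem_univ i)) f).symm
      · rw [Set.indicator_of_notMem hx]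
        obtain ⟨i, hi⟩ := by simpa [Set.mem_pi] using hx
        exact (Finset.prod_eq_zero (Finset.mem_univ i)
          (by rw [Set.indicator_of_notMem hi])).symm
    simp_rw [hind]
    rw [show (volume : Measure (Fin d → ℝ)) = Measure.pi fun _ => volume from volume_pi,
      lintegral_fin_prod d _ (fun i => hfmeas.indicator (hs i))]
    exact Finset.prod_congr rfl fun i _ => by
      rw [lintegral_indicator (hs i), withDensity_apply _ (hs i)]
  have hjoint : Measure.map vec μ = volume.withDensity G :=
    (Measure.pi_eq hrect).symm.trans (Measure.pi_eq hrect2)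
  -- the event and the target set
  set T : Set (Fin d → ℝ) :=
    {x | (1 / Real.sqrt d) * ∑ i, (M (x i) - R) ∈ Set.Icc (-c) 0} with hTdef
  have hsd : 0 < Real.sqrt d := Real.sqrt_pos.mpr (Nat.cast_pos.mpr hd)
  have hsum : ∀ x : Fin d → ℝ, ∑ i, (M (x i) - R) = (∑ i, M (x i)) - d * R := by
    intro x
    rw [Finset.sum_sub_distrib]
    simp [mul_comm]
  have hTmeas : MeasurableSet T := by
    have hg : Measurable fun x : Fin d → ℝ => (1 / Real.sqrt d) * ∑ i, (M (x i) - R) :=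
      (Finset.measurable_sum Finset.univ fun i _ =>
        (hMmeas.comp (measurable_pi_apply i)).sub measurable_const).const_mul _
    exact hg measurableSet_Icc
  have hTbounds : ∀ x ∈ T, d * R - c * Real.sqrt d ≤ (∑ i, M (x i)) ∧
      (∑ i, M (x i)) ≤ d * R := by
    intro x hx
    obtain ⟨h1, h2⟩ := hx
    rw [hsum x] at h1 h2
    set u := (∑ i, M (x i)) - d * R with hu
    constructor
    · have h1' : -c * Real.sqrt d ≤ u := by
        have := mul_le_mul_of_nonneg_left h1 hsd.le
        rw [← mul_assoc, mul_one_div, div_self hsd.ne'] at this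
        nlinarith
      nlinarith
    · nlinarith [mul_le_mul_of_nonneg_left h2 hsd.le,
        mul_one_div (Real.sqrt d) (Real.sqrt d), div_self hsd.ne']
  set B : Set (Fin d → ℝ) := {x | ∑ i, M (x i) ≤ d * R} with hBdef
  have hsub : T ⊆ B := fun x hx => (hTbounds x hx).2
  -- nonnegativity of M
  have hMnn : ∀ t, 0 ≤ M t := by
    intro t
    have := hconv.2 (Set.mem_univ t) (Set.mem_univ (-t))
      (by norm_num : (0:ℝ) ≤ 1/2) (by norm_num : (0:ℝ) ≤ 1/2) (by norm_num)
    simp only [smul_eq_mul, heven] at this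
    have h0 : (1/2 : ℝ) * t + (1/2) * (-t) = 0 := by ring
    rw [h0, hzero] at this
    linarith
  -- B has finite volume
  have hM1 : 0 < M 1 := hpos 1 one_ne_zero
  set K : ℝ := max 1 (d * R / M 1) with hKdef
  have hBsub : B ⊆ Set.pi Set.univ fun _ : Fin d => Set.Icc (-K) K := by
    intro x hx i _
    have hle : M (x i) ≤ d * R := by
      have : ∑ j, M (x j) ≤ d * R := hx
      have hsingle : M (x i) ≤ ∑ j, M (x j) :=
        Finset.single_le_sum (fun j _ => hMnn (x j)) (Finset.mem_univ i)
      linarith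
    have habs : |x i| ≤ K := by
      by_contra h
      push_neg at h
      set a := |x i| with ha
      have ha1 : 1 < a := lt_of_le_of_lt (le_max_left _ _) h
      have ha0 : 0 < a := by linarith
      have hMa : M a = M (x i) := by
        rcases abs_choice (x i) with h' | h'
        · rw [ha, h']
        · rw [ha, h', heven]
      have hcvx := hconv.2 (Set.mem_univ (0:ℝ)) (Set.mem_univ a)
        (by rw [sub_nonneg, div_le_one ha0]; linarith : (0:ℝ) ≤ 1 - 1/a) (by positivity : (0:ℝ) ≤ 1/a) (by ring)
      simp only [smul_eq_mul, mul_zero, zero_add, hzero, mul_zero] at hcvx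
      rw [one_div, inv_mul_cancel₀ ha0.ne'] at hcvx
      -- M 1 ≤ (1/a) * M a
      have hMav : a * M 1 ≤ M a := by
        have h' := mul_le_mul_of_nonneg_left hcvx ha0.le
        rw [← mul_assoc, mul_inv_cancel₀ ha0.ne', one_mul] at h'
        exact h'
      have hKa : d * R / M 1 < a := lt_of_le_of_lt (le_max_right _ _) h
      have : d * R < a * M 1 := by
        rw [div_lt_iff₀ hM1] at hKa
        linarith
      rw [hMa] at hMav
      linarith
    exact abs_le.mp habs
  have hvolB : volume B ≠ ⊤ := by
    refine ne_top_of_le_ne_top ?_ (measure_mono hBsub)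
    rw [volume_pi_pi]
    exact (ENNReal.prod_lt_top fun i _ => by
      simp only [Real.volume_Icc]; exact ENNReal.ofReal_lt_top).ne
  -- the density bound on T
  set C : ℝ := Real.exp (αs * (d * R - c * Real.sqrt d) - d * φ αs) with hCdef
  have hGbound : ∀ x ∈ T, G x ≤ ENNReal.ofReal C := by
    intro x hx
    have h1 := (hTbounds x hx).1
    have : αs * ∑ i, M (x i) ≤ αs * (d * R - c * Real.sqrt d) := by nlinarith
    exact ENNReal.ofReal_le_ofReal (Real.exp_le_exp.mpr (by linarith))
  -- put everything together
  have hμE : μ {ω | (1 / Real.sqrt d) * ∑ i, (M (Z i ω) - R) ∈ Set.Icc (-c) 0}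
      = (volume.withDensity G) T := by
    rw [← hjoint, Measure.map_apply_of_aemeasurable hvec hTmeas]
    rfl
  have hkey : (volume.withDensity G) T ≤ ENNReal.ofReal C * volume B := by
    rw [withDensity_apply _ hTmeas]
    calc ∫⁻ x in T, G x ∂volume ≤ ∫⁻ _ in T, ENNReal.ofReal C ∂volume :=
          setLIntegral_mono measurable_const hGbound
      _ = ENNReal.ofReal C * volume T := by rw [setLIntegral_const]
      _ ≤ ENNReal.ofReal C * volume B :=
          mul_le_mul_right (measure_mono hsub) _
  have hfin : ENNReal.ofReal C * volume B ≠ ⊤ :=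
    ENNReal.mul_ne_top ENNReal.ofReal_ne_top hvolB
  have h1 : (μ {ω | (1 / Real.sqrt d) * ∑ i, (M (Z i ω) - R) ∈ Set.Icc (-c) 0}).toReal
      ≤ C * (volume B).toReal := by
    have := ENNReal.toReal_mono hfin (hμE ▸ hkey)
    rwa [ENNReal.toReal_mul, ENNReal.toReal_ofReal (Real.exp_nonneg _)] at this
  have hAC : Real.exp (d * (φ αs - αs * R)) * Real.exp (c * αs * Real.sqrt d) * C = 1 := by
    rw [hCdef, ← Real.exp_add, ← Real.exp_add, ← Real.exp_zero]
    congr 1; ring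
  calc Real.exp (d * (φ αs - αs * R)) * Real.exp (c * αs * Real.sqrt d) *
        (μ {ω | (1 / Real.sqrt d) * ∑ i, (M (Z i ω) - R) ∈ Set.Icc (-c) 0}).toReal
      ≤ Real.exp (d * (φ αs - αs * R)) * Real.exp (c * αs * Real.sqrt d) *
        (C * (volume B).toReal) := by
        apply mul_le_mul_of_nonneg_left h1 (by positivity)
    _ = (volume B).toReal := by rw [← mul_assoc, hAC, one_mul]
end

section
/- Let d ∈ ℕ, R ∈ (0,∞), M an Orlicz function, α* < 0 with φ'(α*) = R, and Y_i = M(Z_i) - R where Z_1,…,Z_d are i.i.d. with Gibbs density p(x) = exp(α*·M(x) - φ(α*)). Then vol_d(B_M^d(dR)) ≤ exp(d(φ(α*) - α*R)) · P[∑_{i=1}^d Y_i ≤ 0] ≤ exp(d(φ(α*) - α*R)). -/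
open MeasureTheory
open scoped ENNReal

theorem lintegral_fin_pi_prod {n : ℕ} {E : Fin n → Type*}
    [∀ i, MeasureSpace (E i)] [∀ i, SigmaFinite (volume : Measure (E i))]
    (f : (i : Fin n) → E i → ℝ≥0∞) (hf : ∀ i, Measurable (f i)) :
    ∫⁻ x : (i : Fin n) → E i, ∏ i, f i (x i) = ∏ i, ∫⁻ x, f i x := by
  induction n with
  | zero => simp [volume_pi, lintegral_const]
  | succ n ih =>
      calc
        ∫⁻ x : (i : Fin (n+1)) → E i, ∏ i, f i (x i)
          = ∫⁻ x : E 0 × ((i : Fin n) → E (Fin.succ i)),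
              f 0 x.1 * ∏ i : Fin n, f (Fin.succ i) (x.2 i) := by
            rw [volume_pi, ← ((measurePreserving_piFinSuccAbove
              (fun i => (volume : Measure (E i))) 0).symm).lintegral_comp_emb
              (MeasurableEquiv.measurableEmbedding _)]
            simp_rw [MeasurableEquiv.piFinSuccAbove_symm_apply, Fin.insertNthEquiv,
              Fin.prod_univ_succ, Fin.insertNth_zero, Equiv.coe_fn_mk, Fin.cons_succ,
              Fin.zero_succAbove, Fin.cons_zero]
            rfl
        _ = (∫⁻ x, f 0 x) * ∏ i : Fin n, ∫⁻ x : E (Fin.succ i), f (Fin.succ i) x := by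
            rw [← ih (fun i => f (Fin.succ i)) (fun i => hf _)]
            rw [show (volume : Measure (E 0 × ((i : Fin n) → E (Fin.succ i))))
              = (volume : Measure (E 0)).prod volume from rfl]
            exact lintegral_prod_mul (hf 0).aemeasurable
              (Finset.measurable_prod _ fun i _ =>
                (hf _).comp (measurable_pi_apply i)).aemeasurable
        _ = ∏ i, ∫⁻ x, f i x := by rw [Fin.prod_univ_succ]

theorem pi_withDensity_fin {n : ℕ} (f : ℝ → ℝ≥0∞) (hf : Measurable f)
    [SigmaFinite ((volume : Measure ℝ).withDensity f)] :
    Measure.pi (fun _ : Fin n => (volume : Measure ℝ).withDensity f)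
      = (volume : Measure (Fin n → ℝ)).withDensity (fun x => ∏ i, f (x i)) := by
  refine Measure.pi_eq fun s hs => ?_
  rw [withDensity_apply _ (MeasurableSet.univ_pi hs),
    ← lintegral_indicator (MeasurableSet.univ_pi hs) _]
  have hind : (Set.pi Set.univ s).indicator (fun x : Fin n → ℝ => ∏ i, f (x i))
      = fun x => ∏ i, (s i).indicator f (x i) := by
    ext x
    by_cases hx : x ∈ Set.pi Set.univ s
    · rw [Set.indicator_of_mem hx]
      exact Finset.prod_congr rfl fun i _ =>
        (Set.indicator_of_mem (hx i trivial) f).symm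
    · rw [Set.indicator_of_notMem hx]
      obtain ⟨i, hi⟩ : ∃ i, x i ∉ s i := by
        by_contra h
        push_neg at h
        exact hx fun i _ => h i
      exact (Finset.prod_eq_zero (Finset.mem_univ i)
        (Set.indicator_of_notMem hi f)).symm
  rw [hind, lintegral_fin_pi_prod (fun i => (s i).indicator f)
    (fun i => hf.indicator (hs i))]
  exact Finset.prod_congr rfl fun i _ => by
    rw [withDensity_apply _ (hs i), ← lintegral_indicator (hs i) _]

theorem stmt11 {Ω : Type*} [MeasurableSpace Ω] (μ : Measure Ω) [IsProbabilityMeasure μ]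
    (d : ℕ) (hd : 0 < d) (R : ℝ) (hR : 0 < R)
    (M : ℝ → ℝ) (hM : IsOrlicz M)
    (φ : ℝ → ℝ) (hφ : ∀ α, φ α = Real.log (∫ x : ℝ, Real.exp (α * M x)))
    (αs : ℝ) (hαs : αs < 0) (hder : deriv φ αs = R)
    (Z : Fin d → Ω → ℝ)
    (hindep : ProbabilityTheory.iIndepFun Z μ)
    (hdist : ∀ i, Measure.map (Z i) μ =
      volume.withDensity fun x => ENNReal.ofReal (Real.exp (αs * M x - φ αs))) :
    (volume {x : Fin d → ℝ | ∑ i, M (x i) ≤ d * R}).toReal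
        ≤ Real.exp (d * (φ αs - αs * R)) *
            (μ {ω | ∑ i, (M (Z i ω) - R) ≤ 0}).toReal ∧
    Real.exp (d * (φ αs - αs * R)) * (μ {ω | ∑ i, (M (Z i ω) - R) ≤ 0}).toReal
        ≤ Real.exp (d * (φ αs - αs * R)) := by
  have hMcont : Continuous M := hM.1.locallyLipschitz.continuous
  set f : ℝ → ℝ≥0∞ := fun t => ENNReal.ofReal (Real.exp (αs * M t - φ αs)) with hf_def
  have hfmeas : Measurable f :=
    ENNReal.measurable_ofReal.comp
      ((Real.continuous_exp.comp ((continuous_const.mul hMcont).sub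
        continuous_const)).measurable)
  set ν : Measure ℝ := volume.withDensity f with hν_def
  -- each Z i is AEMeasurable
  have hZae : ∀ i, AEMeasurable (Z i) μ := by
    intro i
    by_contra h
    have h0 : ν = 0 := by rw [← hdist i, Measure.map_of_not_aemeasurable h]
    have h1 : ν Set.univ = 0 := by rw [h0]; rfl
    rw [hν_def, withDensity_apply _ MeasurableSet.univ, Measure.restrict_univ,
      lintegral_eq_zero_iff hfmeas] at h1
    have h2 : {t : ℝ | ¬ f t = 0} = Set.univ := by
      ext t
      simp only [Set.mem_setOf_eq, Set.mem_univ, iff_true]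
      exact (ENNReal.ofReal_pos.2 (Real.exp_pos _)).ne'
    have h3 := h1
    rw [Filter.EventuallyEq, ae_iff] at h3
    simp only [Pi.zero_apply] at h3
    rw [h2, Real.volume_univ] at h3
    exact ENNReal.top_ne_zero h3
  haveI hνprob : IsProbabilityMeasure ν := by
    rw [← hdist ⟨0, hd⟩]
    exact Measure.isProbabilityMeasure_map (hZae _)
  -- joint measurable map
  set T : Ω → (Fin d → ℝ) := fun ω i => Z i ω with hT_def
  have hTae : AEMeasurable T μ := by
    refine ⟨fun ω i => (hZae i).mk _ ω,
      measurable_pi_lambda _ fun i => (hZae i).measurable_mk, ?_⟩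
    filter_upwards [ae_all_iff.2 fun i => (hZae i).ae_eq_mk] with ω h
    funext i; exact h i
  -- the joint distribution is the product measure
  have hmap : Measure.pi (fun _ : Fin d => ν) = Measure.map T μ := by
    refine Measure.pi_eq fun s hs => ?_
    rw [Measure.map_apply_of_aemeasurable hTae (MeasurableSet.univ_pi hs)]
    have hpre : T ⁻¹' Set.pi Set.univ s = ⋂ i, Z i ⁻¹' s i := by
      ext ω; simp [hT_def, Set.mem_univ_pi]
    have hindep' := (ProbabilityTheory.iIndepFun_iff_measure_inter_preimage_eq_mul.mp
      hindep) Finset.univ (sets := s) (fun i _ => hs i)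
    rw [hpre, show (⋂ i, Z i ⁻¹' s i) = ⋂ i ∈ Finset.univ, Z i ⁻¹' s i by simp,
      hindep']
    exact Finset.prod_congr rfl fun i _ => by
      rw [← hdist i, Measure.map_apply_of_aemeasurable (hZae i) (hs i)]
  -- the ball
  set B : Set (Fin d → ℝ) := {x | ∑ i, M (x i) ≤ d * R} with hB_def
  have hBmeas : MeasurableSet B := by
    have : Continuous fun x : Fin d → ℝ => ∑ i, M (x i) :=
      continuous_finset_sum _ fun i _ => hMcont.comp (continuous_apply i)
    exact measurableSet_le this.measurable measurable_const
  -- the event equals the preimage of the ball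
  have hSeq : {ω | ∑ i, (M (Z i ω) - R) ≤ 0} = T ⁻¹' B := by
    ext ω
    simp only [Set.mem_setOf_eq, Set.mem_preimage, hB_def, hT_def]
    rw [Finset.sum_sub_distrib, Finset.sum_const, Finset.card_univ, Fintype.card_fin,
      nsmul_eq_mul, sub_nonpos]
  -- compute μ of the event
  have hμS : μ {ω | ∑ i, (M (Z i ω) - R) ≤ 0} = ∫⁻ x in B, ∏ i, f (x i) := by
    rw [hSeq, ← Measure.map_apply_of_aemeasurable hTae hBmeas, ← hmap,
      pi_withDensity_fin f hfmeas, withDensity_apply _ hBmeas]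
  -- product of densities
  have hprod : ∀ x : Fin d → ℝ, (∏ i, f (x i))
      = ENNReal.ofReal (Real.exp (αs * ∑ i, M (x i) - d * φ αs)) := by
    intro x
    rw [hf_def]
    rw [← ENNReal.ofReal_prod_of_nonneg (fun i _ => (Real.exp_pos _).le),
      ← Real.exp_sum]
    congr 1
    rw [Finset.sum_sub_distrib, ← Finset.mul_sum, Finset.sum_const, Finset.card_univ,
      Fintype.card_fin, nsmul_eq_mul]
  -- lower bound for μ of the event
  set c : ℝ := Real.exp (αs * (d * R) - d * φ αs) with hc_def
  have hcpos : 0 < c := Real.exp_pos _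
  have key : ENNReal.ofReal c * volume B ≤ μ {ω | ∑ i, (M (Z i ω) - R) ≤ 0} := by
    rw [hμS, ← setLIntegral_const B (ENNReal.ofReal c)]
    refine setLIntegral_mono ?_ ?_
    · exact Finset.measurable_prod _ fun i _ => hfmeas.comp (measurable_pi_apply i)
    · intro x hx
      rw [hprod x, hc_def]
      refine ENNReal.ofReal_le_ofReal (Real.exp_le_exp.2 ?_)
      have : αs * (d * R) ≤ αs * ∑ i, M (x i) :=
        mul_le_mul_of_nonpos_left hx hαs.le
      linarith
  -- invert the constant
  have hcinv : c⁻¹ = Real.exp ((d : ℝ) * (φ αs - αs * R)) := by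
    rw [hc_def, ← Real.exp_neg]
    congr 1; ring
  have hvolB : volume B ≤ ENNReal.ofReal c⁻¹ * μ {ω | ∑ i, (M (Z i ω) - R) ≤ 0} := by
    have h1 : volume B = ENNReal.ofReal c⁻¹ * (ENNReal.ofReal c * volume B) := by
      rw [← mul_assoc, ← ENNReal.ofReal_mul (inv_nonneg.2 hcpos.le),
        inv_mul_cancel₀ hcpos.ne', ENNReal.ofReal_one, one_mul]
    rw [h1]
    exact mul_le_mul_right key _
  constructor
  · have hfin : ENNReal.ofReal c⁻¹ * μ {ω | ∑ i, (M (Z i ω) - R) ≤ 0} ≠ ⊤ :=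
      ENNReal.mul_ne_top ENNReal.ofReal_ne_top (measure_ne_top μ _)
    have := ENNReal.toReal_mono hfin hvolB
    rwa [ENNReal.toReal_mul, ENNReal.toReal_ofReal (inv_nonneg.2 hcpos.le), hcinv]
      at this
  · have h1 : (μ {ω | ∑ i, (M (Z i ω) - R) ≤ 0}).toReal ≤ 1 := by
      have := ENNReal.toReal_mono ENNReal.one_ne_top
        (prob_le_one (μ := μ) (s := {ω | ∑ i, (M (Z i ω) - R) ≤ 0}))
      simpa using this
    exact mul_le_of_le_one_right (Real.exp_nonneg _) h1
end

section
/- Let R ∈ (0,∞) and M be an Orlicz function. Then lim_{d→∞} (1/d)·log vol_d(B_M^d(dR)) = φ(α*) - α*·R, where φ(α) = log ∫_ℝ exp(α·M(x)) dx and α* < 0 is the unique solution of φ'(α*) = R. Equivalently, vol_d(B_M^d(dR))^{1/d} → exp(φ(α*) - α*·R) as d → ∞. -/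
open MeasureTheory Filter Real
open scoped ENNReal

variable {M : ℝ → ℝ}

lemma orlicz_nonneg (hM : IsOrlicz M) (t : ℝ) : 0 ≤ M t := by
  obtain ⟨hc, he, h0, hp⟩ := hM
  have := hc.2 (Set.mem_univ t) (Set.mem_univ (-t)) (by norm_num : (0:ℝ) ≤ 1/2)
    (by norm_num : (0:ℝ) ≤ 1/2) (by norm_num)
  simp only [smul_eq_mul] at this
  have h : (1/2 : ℝ) * t + (1/2) * (-t) = 0 := by ring
  rw [h, h0, he] at this
  linarith

lemma orlicz_cont (hM : IsOrlicz M) : Continuous M := by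
  have := hM.1.continuousOn isOpen_univ
  rw [← continuousOn_univ]
  exact this

lemma orlicz_growth (hM : IsOrlicz M) {t : ℝ} (ht : 1 ≤ t) : M 1 * t ≤ M t := by
  obtain ⟨hc, he, h0, hp⟩ := hM
  have ht0 : 0 < t := lt_of_lt_of_le one_pos ht
  have := hc.2 (Set.mem_univ t) (Set.mem_univ 0) (le_of_lt (by positivity : (0:ℝ) < 1/t))
    (by have : (0:ℝ) ≤ 1 - 1/t := by
          rw [sub_nonneg]; exact (div_le_one ht0).2 ht
        exact this)
    (by field_simp; ring)
  simp only [smul_eq_mul] at this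
  have h1 : (1/t) * t + (1 - 1/t) * 0 = 1 := by field_simp; ring
  rw [h1, h0] at this
  have h2 : M 1 ≤ 1/t * M t := by linarith
  calc M 1 * t ≤ (1/t * M t) * t := mul_le_mul_of_nonneg_right h2 ht0.le
    _ = M t := by field_simp

lemma integrable_exp_mul_abs {b : ℝ} (hb : b < 0) :
    Integrable (fun x : ℝ => rexp (b * |x|)) := by
  have hIoi : IntegrableOn (fun x : ℝ => rexp (b * |x|)) (Set.Ioi 0) := by
    have h := exp_neg_integrableOn_Ioi 0 (neg_pos.2 hb)
    refine h.congr_fun (fun x hx => ?_) measurableSet_Ioi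
    rw [abs_of_pos hx]; ring_nf
  have hIic : IntegrableOn (fun x : ℝ => rexp (b * |x|)) (Set.Iic 0) := by
    rw [← Measure.map_neg_eq_self (volume : Measure ℝ)]
    have m : MeasurableEmbedding fun x : ℝ => -x :=
      (Homeomorph.neg ℝ).measurableEmbedding
    rw [m.integrableOn_map_iff]
    simp only [Function.comp_def, abs_neg, Set.neg_preimage, Set.neg_Iic, neg_zero]
    exact (integrableOn_Ici_iff_integrableOn_Ioi).mpr hIoi
  have := hIic.union hIoi
  rwa [Set.Iic_union_Ioi, integrableOn_univ] at this

lemma exp_integrable (hM : IsOrlicz M) {α : ℝ} (hα : α < 0) :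
    Integrable (fun x : ℝ => rexp (α * M x)) := by
  have hc : 0 < M 1 := hM.2.2.2 1 one_ne_zero
  set b := α * M 1 with hbdef
  have hb : b < 0 := mul_neg_of_neg_of_pos hα hc
  have hdom : ∀ x : ℝ, rexp (α * M x) ≤ rexp (b * (|x| - 1)) := by
    intro x
    apply exp_le_exp.2
    rcases le_or_gt (|x|) 1 with h | h
    · have h1 : 0 ≤ α * M x → True := fun _ => trivial
      have : α * M x ≤ 0 := mul_nonpos_of_nonpos_of_nonneg hα.le (orlicz_nonneg hM x)
      nlinarith
    · have hgx : M 1 * |x| ≤ M |x| := orlicz_growth hM h.le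
      have : M |x| = M x := by
        rcases abs_cases x with ⟨h1, _⟩ | ⟨h1, _⟩
        · rw [h1]
        · rw [h1, hM.2.1]
      nlinarith [hgx, this]
  have hint : Integrable (fun x : ℝ => rexp (b * (|x| - 1))) := by
    have : (fun x : ℝ => rexp (b * (|x| - 1))) = fun x => rexp (-b) * rexp (b * |x|) := by
      funext x; rw [← exp_add]; ring_nf
    rw [this]
    exact (integrable_exp_mul_abs hb).const_mul _
  refine hint.mono ?_ (ae_of_all _ fun x => ?_)
  · apply Measurable.aestronglyMeasurable
    exact (measurable_const.mul (orlicz_cont hM).measurable).exp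
  · rw [norm_of_nonneg (exp_pos _).le, norm_of_nonneg (exp_pos _).le]
    exact hdom x

lemma pow_le_exp_aux {t c : ℝ} (ht : 0 ≤ t) (hc : 0 < c) : t ≤ c * rexp (t / c) := by
  have h := Real.add_one_le_exp (t / c)
  have h2 : t / c ≤ rexp (t / c) := by linarith [(exp_pos (t/c)).le]
  calc t = c * (t / c) := by field_simp
    _ ≤ c * rexp (t / c) := mul_le_mul_of_nonneg_left h2 hc.le

lemma integrable_pow_mul_exp (hM : IsOrlicz M) {α : ℝ} (hα : α < 0) (k : ℕ) :
    Integrable (fun x : ℝ => M x ^ k * rexp (α * M x)) := by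
  rcases Nat.eq_zero_or_pos k with hk | hk
  · simp only [hk, pow_zero, one_mul]; exact exp_integrable hM hα
  · set c : ℝ := 2 * k / (-α) with hcdef
    have hc : 0 < c := by
      apply div_pos (by positivity) (by linarith)
    have hbound : ∀ x : ℝ, M x ^ k * rexp (α * M x) ≤ c ^ k * rexp ((α / 2) * M x) := by
      intro x
      have hMx := orlicz_nonneg hM x
      have h1 : M x ≤ c * rexp (M x / c) := pow_le_exp_aux hMx hc
      have h2 : M x ^ k ≤ (c * rexp (M x / c)) ^ k :=
        pow_le_pow_left₀ hMx h1 k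
      have h3 : (c * rexp (M x / c)) ^ k = c ^ k * rexp (k * (M x / c)) := by
        rw [mul_pow, ← Real.exp_nat_mul]
      have h4 : (k : ℝ) * (M x / c) = (-α / 2) * M x := by
        rw [hcdef]; field_simp
      have h5 : M x ^ k * rexp (α * M x) ≤ c ^ k * rexp ((-α / 2) * M x) * rexp (α * M x) := by
        apply mul_le_mul_of_nonneg_right _ (exp_pos _).le
        rw [← h4, ← h3]; exact h2
      have h6 : rexp ((-α / 2) * M x) * rexp (α * M x) = rexp ((α / 2) * M x) := by
        rw [← exp_add]; ring_nf
      calc M x ^ k * rexp (α * M x) ≤ c ^ k * (rexp ((-α / 2) * M x) * rexp (α * M x)) := by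
            rw [← mul_assoc]; exact h5
        _ = c ^ k * rexp ((α / 2) * M x) := by rw [h6]
    have hint : Integrable (fun x : ℝ => c ^ k * rexp ((α / 2) * M x)) :=
      (exp_integrable hM (by linarith)).const_mul _
    refine hint.mono ?_ (ae_of_all _ fun x => ?_)
    · apply Measurable.aestronglyMeasurable
      exact ((orlicz_cont hM).measurable.pow_const k).mul
        (measurable_const.mul (orlicz_cont hM).measurable).exp
    · have hMx := orlicz_nonneg hM x
      rw [norm_of_nonneg (by positivity), norm_of_nonneg (by positivity)]
      exact hbound x

noncomputable def Zf (M : ℝ → ℝ) (α : ℝ) : ℝ := ∫ x : ℝ, rexp (α * M x)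
noncomputable def Zd (M : ℝ → ℝ) (α : ℝ) : ℝ := ∫ x : ℝ, M x * rexp (α * M x)
noncomputable def Zdd (M : ℝ → ℝ) (α : ℝ) : ℝ := ∫ x : ℝ, (M x)^2 * rexp (α * M x)

lemma Zf_pos (hM : IsOrlicz M) {α : ℝ} (hα : α < 0) : 0 < Zf M α := by
  rw [Zf]
  apply (integral_pos_iff_support_of_nonneg_ae (ae_of_all _ fun x => (exp_pos _).le)
    (exp_integrable hM hα)).2
  have : (Function.support fun x : ℝ => rexp (α * M x)) = Set.univ := by
    ext x; simp [Function.support, (exp_pos (α * M x)).ne']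
  rw [this]
  simp

lemma hasDerivAt_Zf (hM : IsOrlicz M) {α : ℝ} (hα : α < 0) :
    HasDerivAt (Zf M) (Zd M α) α := by
  have hmeas : Measurable M := (orlicz_cont hM).measurable
  have key := hasDerivAt_integral_of_dominated_loc_of_deriv_le
    (F := fun (β : ℝ) (a : ℝ) => rexp (β * M a))
    (F' := fun (β : ℝ) (a : ℝ) => M a * rexp (β * M a))
    (x₀ := α) (s := Metric.ball α (-α/2)) (μ := volume)
    (bound := fun a => M a * rexp ((α/2) * M a))
    (Metric.ball_mem_nhds _ (by linarith))
    (Eventually.of_forall fun β =>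
      ((measurable_const.mul hmeas).exp).aestronglyMeasurable)
    (exp_integrable hM hα)
    ((hmeas.mul (measurable_const.mul hmeas).exp).aestronglyMeasurable)
    (ae_of_all _ (fun a β hβ => by
      have hMa := orlicz_nonneg hM a
      have hβ2 : β ≤ α/2 := by
        rw [Metric.mem_ball, Real.dist_eq, abs_lt] at hβ
        linarith [hβ.2]
      rw [norm_of_nonneg (by positivity)]
      apply mul_le_mul_of_nonneg_left _ hMa
      exact exp_le_exp.2 (mul_le_mul_of_nonneg_right hβ2 hMa)))
    (by simpa using integrable_pow_mul_exp hM (by linarith : α/2 < 0) 1)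
    (ae_of_all _ (fun a β _ => by
      have h := ((hasDerivAt_id β).mul_const (M a)).exp
      simpa [mul_comm] using h))
  exact key.2

lemma hasDerivAt_Zd (hM : IsOrlicz M) {α : ℝ} (hα : α < 0) :
    HasDerivAt (Zd M) (Zdd M α) α := by
  have hmeas : Measurable M := (orlicz_cont hM).measurable
  have key := hasDerivAt_integral_of_dominated_loc_of_deriv_le
    (F := fun (β : ℝ) (a : ℝ) => M a * rexp (β * M a))
    (F' := fun (β : ℝ) (a : ℝ) => (M a)^2 * rexp (β * M a))
    (x₀ := α) (s := Metric.ball α (-α/2)) (μ := volume)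
    (bound := fun a => (M a)^2 * rexp ((α/2) * M a))
    (Metric.ball_mem_nhds _ (by linarith))
    (Eventually.of_forall fun β =>
      (hmeas.mul (measurable_const.mul hmeas).exp).aestronglyMeasurable)
    (by simpa using integrable_pow_mul_exp hM hα 1)
    (((hmeas.pow_const 2).mul (measurable_const.mul hmeas).exp).aestronglyMeasurable)
    (ae_of_all _ (fun a β hβ => by
      have hMa := orlicz_nonneg hM a
      have hβ2 : β ≤ α/2 := by
        rw [Metric.mem_ball, Real.dist_eq, abs_lt] at hβ
        linarith [hβ.2]
      rw [norm_of_nonneg (by positivity)]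
      apply mul_le_mul_of_nonneg_left _ (by positivity)
      exact exp_le_exp.2 (mul_le_mul_of_nonneg_right hβ2 hMa)))
    (integrable_pow_mul_exp hM (by linarith : α/2 < 0) 2)
    (ae_of_all _ (fun a β _ => by
      have h := (((hasDerivAt_id β).mul_const (M a)).exp).const_mul (M a)
      have heq : M a * (rexp (β * M a) * M a) = (M a)^2 * rexp (β * M a) := by ring
      simpa [heq] using h))
  exact key.2

lemma variance_pos (hM : IsOrlicz M) {α : ℝ} (hα : α < 0) :
    0 < Zdd M α * Zf M α - (Zd M α)^2 := by
  have hmeas : Measurable M := (orlicz_cont hM).measurable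
  have hZf := Zf_pos hM hα
  set m : ℝ := Zd M α / Zf M α with hm
  have hint0 := exp_integrable hM hα
  have hint1 : Integrable (fun x : ℝ => M x * rexp (α * M x)) := by
    simpa using integrable_pow_mul_exp hM hα 1
  have hint2 := integrable_pow_mul_exp hM hα 2
  have hexpand : (fun x : ℝ => (M x - m)^2 * rexp (α * M x))
      = fun x => (M x)^2 * rexp (α * M x) - (2*m) * (M x * rexp (α * M x))
          + m^2 * rexp (α * M x) := by
    funext x; ring
  have hintV : Integrable (fun x : ℝ => (M x - m)^2 * rexp (α * M x)) := by
    rw [hexpand]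
    exact (hint2.sub (hint1.const_mul _)).add (hint0.const_mul _)
  have hsub : Integrable (fun x : ℝ => M x ^ 2 * rexp (α * M x)
      - 2*m * (M x * rexp (α * M x))) := hint2.sub (hint1.const_mul _)
  have hV : (∫ x : ℝ, (M x - m)^2 * rexp (α * M x))
      = Zdd M α - 2*m*(Zd M α) + m^2 * Zf M α := by
    rw [hexpand, integral_add hsub (hint0.const_mul _),
      integral_sub hint2 (hint1.const_mul _), integral_const_mul, integral_const_mul]
    rfl
  have hVpos : 0 < ∫ x : ℝ, (M x - m)^2 * rexp (α * M x) := by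
    have hnn : ∀ x : ℝ, 0 ≤ (M x - m)^2 * rexp (α * M x) :=
      fun x => mul_nonneg (sq_nonneg _) (exp_pos _).le
    rcases lt_or_eq_of_le (integral_nonneg (f := fun x : ℝ => (M x - m)^2 * rexp (α * M x)) hnn) with h | h
    · exact h
    · exfalso
      have hae : (fun x : ℝ => (M x - m)^2 * rexp (α * M x)) =ᵐ[volume] 0 := by
        rw [← integral_eq_zero_iff_of_nonneg hnn hintV]
        exact h.symm
      have hnull : volume {x : ℝ | M x ≠ m} = 0 := by
        apply measure_mono_null _ (ae_iff.1 hae)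
        intro x hx
        simp only [Set.mem_setOf_eq, Pi.zero_apply] at *
        intro hcon
        apply hx
        have := (exp_pos (α * M x)).ne'
        have h2 : (M x - m)^2 = 0 := by
          by_contra h3
          exact (mul_ne_zero h3 this) hcon
        have := pow_eq_zero_iff (n := 2) (by norm_num) |>.1 h2
        linarith
      have hopen : IsOpen {x : ℝ | M x ≠ m} := by
        have : IsClosed {x : ℝ | M x = m} := isClosed_eq (orlicz_cont hM) continuous_const
        simpa [Set.compl_setOf] using this.isOpen_compl
      have hempty := hopen.eq_empty_of_measure_zero hnull
      have h0 : M 0 = m := by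
        by_contra h
        have : (0:ℝ) ∈ {x : ℝ | M x ≠ m} := h
        rw [hempty] at this; exact this
      have h1 : M 1 = m := by
        by_contra h
        have : (1:ℝ) ∈ {x : ℝ | M x ≠ m} := h
        rw [hempty] at this; exact this
      have := hM.2.2.2 1 one_ne_zero
      rw [hM.2.2.1] at h0
      rw [h1, ← h0] at this
      exact lt_irrefl _ this
  rw [hV] at hVpos
  have hmZ : m * Zf M α = Zd M α := by
    rw [hm]; field_simp
  nlinarith [hVpos, hZf]

lemma hasDerivAt_psi (hM : IsOrlicz M) {α : ℝ} (hα : α < 0) :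
    HasDerivAt (fun β => Zd M β / Zf M β)
      ((Zdd M α * Zf M α - Zd M α * Zd M α) / (Zf M α)^2) α :=
  (hasDerivAt_Zd hM hα).div (hasDerivAt_Zf hM hα) (Zf_pos hM hα).ne'

lemma psi_strictMono (hM : IsOrlicz M) :
    StrictMonoOn (fun β => Zd M β / Zf M β) (Set.Iio 0) := by
  apply strictMonoOn_of_deriv_pos (convex_Iio 0)
  · intro x hx
    exact ((hasDerivAt_psi hM hx).continuousAt).continuousWithinAt
  · intro x hx
    rw [interior_Iio] at hx
    rw [(hasDerivAt_psi hM hx).deriv]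
    have h1 := variance_pos hM hx
    have h2 := Zf_pos hM hx
    have : Zd M x * Zd M x = (Zd M x)^2 := by ring
    rw [this]
    positivity

lemma hasDerivAt_phi (hM : IsOrlicz M) {φ : ℝ → ℝ}
    (hφ : ∀ α, φ α = Real.log (∫ x : ℝ, Real.exp (α * M x)))
    {α : ℝ} (hα : α < 0) :
    HasDerivAt φ (Zd M α / Zf M α) α := by
  have h : φ = fun β => Real.log (Zf M β) := funext hφ
  rw [h]
  exact (hasDerivAt_Zf hM hα).log (Zf_pos hM hα).ne'

lemma integrable_gW (hM : IsOrlicz M) {α : ℝ} (hα : α < 0) (m : ℝ) :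
    Integrable (fun t : ℝ => (M t - m) * rexp (α * M t)) := by
  have : (fun t : ℝ => (M t - m) * rexp (α * M t))
      = fun t => M t * rexp (α * M t) - m * rexp (α * M t) := by funext t; ring
  rw [this]
  exact (by simpa using integrable_pow_mul_exp hM hα 1 : Integrable (fun t : ℝ => M t * rexp (α * M t))).sub
    ((exp_integrable hM hα).const_mul m)

lemma integrable_g2W (hM : IsOrlicz M) {α : ℝ} (hα : α < 0) (m : ℝ) :
    Integrable (fun t : ℝ => ((M t - m) * (M t - m)) * rexp (α * M t)) := by
  have : (fun t : ℝ => ((M t - m) * (M t - m)) * rexp (α * M t))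
      = fun t => M t ^ 2 * rexp (α * M t) - (2*m) * (M t * rexp (α * M t))
          + m^2 * rexp (α * M t) := by funext t; ring
  rw [this]
  exact ((integrable_pow_mul_exp hM hα 2).sub
    ((by simpa using integrable_pow_mul_exp hM hα 1 : Integrable (fun t : ℝ => M t * rexp (α * M t))).const_mul _)).add
    ((exp_integrable hM hα).const_mul _)

lemma integral_gW (hM : IsOrlicz M) {α : ℝ} (hα : α < 0) :
    ∫ t : ℝ, (M t - Zd M α / Zf M α) * rexp (α * M t) = 0 := by
  have h1 : (fun t : ℝ => (M t - Zd M α / Zf M α) * rexp (α * M t))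
      = fun t => M t * rexp (α * M t) - (Zd M α / Zf M α) * rexp (α * M t) := by
    funext t; ring
  rw [h1, integral_sub (by simpa using integrable_pow_mul_exp hM hα 1)
    ((exp_integrable hM hα).const_mul _), integral_const_mul]
  have : (∫ t : ℝ, M t * rexp (α * M t)) = Zd M α := rfl
  rw [this]
  have : (∫ t : ℝ, rexp (α * M t)) = Zf M α := rfl
  rw [this]
  field_simp [(Zf_pos hM hα).ne']
  ring

lemma integral_g2W (hM : IsOrlicz M) {α : ℝ} (hα : α < 0) {m : ℝ}
    (hm : m = Zd M α / Zf M α) :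
    ∫ t : ℝ, ((M t - m) * (M t - m)) * rexp (α * M t)
      = Zdd M α - 2*m*Zd M α + m^2 * Zf M α := by
  have h1 : (fun t : ℝ => ((M t - m) * (M t - m)) * rexp (α * M t))
      = fun t => M t ^ 2 * rexp (α * M t) - (2*m) * (M t * rexp (α * M t))
          + m^2 * rexp (α * M t) := by funext t; ring
  have hsub : Integrable (fun t : ℝ => M t ^ 2 * rexp (α * M t)
      - (2*m) * (M t * rexp (α * M t))) :=
    (integrable_pow_mul_exp hM hα 2).sub
      ((by simpa using integrable_pow_mul_exp hM hα 1 : Integrable (fun t : ℝ => M t * rexp (α * M t))).const_mul _)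
  rw [h1, integral_add hsub ((exp_integrable hM hα).const_mul _),
    integral_sub (integrable_pow_mul_exp hM hα 2)
      ((by simpa using integrable_pow_mul_exp hM hα 1 : Integrable (fun t : ℝ => M t * rexp (α * M t))).const_mul _),
    integral_const_mul, integral_const_mul]
  rfl

lemma cheb (hM : IsOrlicz M) {α : ℝ} (hα : α < 0) {m V : ℝ}
    (hm : m = Zd M α / Zf M α)
    (hV : V = Zdd M α - 2*m*Zd M α + m^2 * Zf M α) (d : ℕ) :
    Integrable (fun x : Fin d → ℝ =>
      (∑ i, (M (x i) - m))^2 * rexp (α * ∑ i, M (x i))) ∧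
    (∫ x : Fin d → ℝ, (∑ i, (M (x i) - m))^2 * rexp (α * ∑ i, M (x i)))
      = d * V * (Zf M α)^(d-1) := by
  classical
  set W : ℝ → ℝ := fun t => rexp (α * M t) with hW
  set g : ℝ → ℝ := fun t => M t - m with hg
  set f : Fin d → Fin d → Fin d → ℝ → ℝ :=
    fun i j k t => (if k = i then g t else 1) * (if k = j then g t else 1) * W t with hf
  have hfcases : ∀ (i j k : Fin d),
      (k = i ∧ k = j ∧ f i j k = fun t => ((M t - m) * (M t - m)) * rexp (α * M t))
      ∨ (k = i ∧ k ≠ j ∧ f i j k = fun t => (M t - m) * rexp (α * M t))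
      ∨ (k ≠ i ∧ k = j ∧ f i j k = fun t => (M t - m) * rexp (α * M t))
      ∨ (k ≠ i ∧ k ≠ j ∧ f i j k = fun t => rexp (α * M t)) := by
    intro i j k
    by_cases hi : k = i <;> by_cases hj : k = j
    · refine Or.inl ⟨hi, hj, ?_⟩
      funext t
      simp only [hf, hg, hW]
      rw [if_pos hi, if_pos hj]
    · refine Or.inr (Or.inl ⟨hi, hj, ?_⟩)
      funext t
      simp only [hf, hg, hW]
      rw [if_pos hi, if_neg hj, mul_one]
    · refine Or.inr (Or.inr (Or.inl ⟨hi, hj, ?_⟩))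
      funext t
      simp only [hf, hg, hW]
      rw [if_neg hi, if_pos hj, one_mul]
    · refine Or.inr (Or.inr (Or.inr ⟨hi, hj, ?_⟩))
      funext t
      simp only [hf, hg, hW]
      rw [if_neg hi, if_neg hj, one_mul, one_mul]
  have h_each : ∀ i j k, Integrable (f i j k) := by
    intro i j k
    rcases hfcases i j k with ⟨_, _, h⟩ | ⟨_, _, h⟩ | ⟨_, _, h⟩ | ⟨_, _, h⟩ <;> rw [h]
    · exact integrable_g2W hM hα m
    · exact integrable_gW hM hα m
    · exact integrable_gW hM hα m
    · exact exp_integrable hM hα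
  have h_ptw : ∀ x : Fin d → ℝ,
      (∑ i, (M (x i) - m))^2 * rexp (α * ∑ i, M (x i))
        = ∑ i, ∑ j, ∏ k, f i j k (x k) := by
    intro x
    have hexp : rexp (α * ∑ i, M (x i)) = ∏ k, W (x k) := by
      rw [Finset.mul_sum, Real.exp_sum]
    have hprod : ∀ i j, (∏ k, f i j k (x k)) = g (x i) * g (x j) * ∏ k, W (x k) := by
      intro i j
      simp only [hf]
      rw [Finset.prod_mul_distrib, Finset.prod_mul_distrib,
        Fintype.prod_ite_eq' i (fun k => g (x k)),
        Fintype.prod_ite_eq' j (fun k => g (x k))]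
    simp only [hprod]
    rw [hexp, sq, Finset.sum_mul_sum]
    rw [Finset.sum_mul]
    congr 1
    funext i
    rw [Finset.sum_mul]
  have h_int : Integrable (fun x : Fin d → ℝ =>
      (∑ i, (M (x i) - m))^2 * rexp (α * ∑ i, M (x i))) := by
    have : (fun x : Fin d → ℝ =>
        (∑ i, (M (x i) - m))^2 * rexp (α * ∑ i, M (x i)))
        = fun x => ∑ i, ∑ j, ∏ k, f i j k (x k) := funext h_ptw
    rw [this]
    apply integrable_finset_sum
    intro i _
    apply integrable_finset_sum
    intro j _
    exact Integrable.fintype_prod (f := fun k => f i j k) (h_each i j)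
  refine ⟨h_int, ?_⟩
  have h_one : ∀ i j k : Fin d, (∫ t : ℝ, f i j k t)
      = if k = i then (if k = j then V else 0) else (if k = j then 0 else Zf M α) := by
    intro i j k
    rcases hfcases i j k with ⟨h1, h2, h⟩ | ⟨h1, h2, h⟩ | ⟨h1, h2, h⟩ | ⟨h1, h2, h⟩
    · rw [h, if_pos h1, if_pos h2, hV]
      exact integral_g2W hM hα hm
    · rw [h, if_pos h1, if_neg h2, hm]
      exact integral_gW hM hα
    · rw [h, if_neg h1, if_pos h2]
      rw [hm]
      exact integral_gW hM hα
    · rw [h, if_neg h1, if_neg h2]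
      rfl
  have h_prodval : ∀ i j : Fin d, (∏ k, ∫ t : ℝ, f i j k t)
      = if i = j then V * (Zf M α)^(d-1) else 0 := by
    intro i j
    by_cases hij : i = j
    · rw [if_pos hij]
      subst hij
      have hterm : ∀ k : Fin d, (∫ t : ℝ, f i i k t) = if k = i then V else Zf M α := by
        intro k
        rw [h_one i i k]
        by_cases hk : k = i
        · rw [if_pos hk, if_pos hk, if_pos hk]
        · rw [if_neg hk, if_neg hk, if_neg hk]
      calc (∏ k, ∫ t : ℝ, f i i k t) = ∏ k, (if k = i then V else Zf M α) := by
            exact Finset.prod_congr rfl (fun k _ => hterm k)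
        _ = (if (i : Fin d) = i then V else Zf M α)
            * ∏ k ∈ Finset.univ.erase i, (if k = i then V else Zf M α) := by
            exact (Finset.mul_prod_erase Finset.univ _ (Finset.mem_univ i)).symm
        _ = V * (Zf M α)^(d-1) := by
            rw [if_pos rfl]
            congr 1
            rw [Finset.prod_congr rfl (fun k hk => if_neg (Finset.ne_of_mem_erase hk)),
              Finset.prod_const, Finset.card_erase_of_mem (Finset.mem_univ i),
              Finset.card_univ, Fintype.card_fin]
    · rw [if_neg hij]
      apply Finset.prod_eq_zero (Finset.mem_univ i)
      rw [h_one i j i, if_pos rfl, if_neg hij]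
  calc (∫ x : Fin d → ℝ, (∑ i, (M (x i) - m))^2 * rexp (α * ∑ i, M (x i)))
      = ∫ x : Fin d → ℝ, ∑ i, ∑ j, ∏ k, f i j k (x k) := by
        congr 1; exact funext h_ptw
    _ = ∑ i, ∫ x : Fin d → ℝ, ∑ j, ∏ k, f i j k (x k) := by
        apply integral_finset_sum
        intro i _
        exact integrable_finset_sum _ (fun j _ =>
          Integrable.fintype_prod (f := fun k => f i j k) (h_each i j))
    _ = ∑ i, ∑ j, ∫ x : Fin d → ℝ, ∏ k, f i j k (x k) := by
        apply Finset.sum_congr rfl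
        intro i _
        exact integral_finset_sum _ (fun j _ =>
          Integrable.fintype_prod (f := fun k => f i j k) (h_each i j))
    _ = ∑ i, ∑ j, ∏ k, ∫ t : ℝ, f i j k t := by
        apply Finset.sum_congr rfl
        intro i _
        apply Finset.sum_congr rfl
        intro j _
        exact integral_fintype_prod_volume_eq_prod (fun k => f i j k)
    _ = ∑ i : Fin d, ∑ j : Fin d, (if i = j then V * (Zf M α)^(d-1) else 0) := by
        apply Finset.sum_congr rfl
        intro i _
        apply Finset.sum_congr rfl
        intro j _
        exact h_prodval i j
    _ = ∑ i : Fin d, V * (Zf M α)^(d-1) := by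
        apply Finset.sum_congr rfl
        intro i _
        exact Fintype.sum_ite_eq i (fun _ => V * (Zf M α)^(d-1))
    _ = d * V * (Zf M α)^(d-1) := by
        rw [Finset.sum_const, Finset.card_univ, Fintype.card_fin, nsmul_eq_mul, mul_assoc]

lemma exp_S_eq {α : ℝ} (d : ℕ) (x : Fin d → ℝ) :
    rexp (α * ∑ i, M (x i)) = ∏ i, rexp (α * M (x i)) := by
  rw [Finset.mul_sum, Real.exp_sum]

lemma integrable_exp_S (hM : IsOrlicz M) {α : ℝ} (hα : α < 0) (d : ℕ) :
    Integrable (fun x : Fin d → ℝ => rexp (α * ∑ i, M (x i))) := by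
  have : (fun x : Fin d → ℝ => rexp (α * ∑ i, M (x i)))
      = fun x => ∏ i, rexp (α * M (x i)) := funext (exp_S_eq d)
  rw [this]
  exact Integrable.fintype_prod (f := fun _ t => rexp (α * M t))
    (fun _ => exp_integrable hM hα)

lemma integral_exp_S (hM : IsOrlicz M) {α : ℝ} (hα : α < 0) (d : ℕ) :
    (∫ x : Fin d → ℝ, rexp (α * ∑ i, M (x i))) = (Zf M α)^d := by
  have : (fun x : Fin d → ℝ => rexp (α * ∑ i, M (x i)))
      = fun x => ∏ i, rexp (α * M (x i)) := funext (exp_S_eq d)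
  rw [this, integral_fintype_prod_volume_eq_pow (fun t => rexp (α * M t)), Fintype.card_fin]
  rfl

lemma continuous_S (hM : IsOrlicz M) (d : ℕ) :
    Continuous (fun x : Fin d → ℝ => ∑ i, M (x i)) :=
  continuous_finset_sum _ (fun i _ => (orlicz_cont hM).comp (continuous_apply i))

lemma vol_upper (hM : IsOrlicz M) {α R : ℝ} (hα : α < 0) (d : ℕ) :
    volume {x : Fin d → ℝ | ∑ i, M (x i) ≤ d * R}
      ≤ ENNReal.ofReal (rexp (-α * d * R) * (Zf M α)^d) := by
  set B := {x : Fin d → ℝ | ∑ i, M (x i) ≤ d * R} with hB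
  have hBmeas : MeasurableSet B :=
    measurableSet_le (continuous_S hM d).measurable measurable_const
  have h1 : volume B = ∫⁻ x : Fin d → ℝ, B.indicator (1 : (Fin d → ℝ) → ℝ≥0∞) x :=
    (lintegral_indicator_one hBmeas).symm
  rw [h1]
  have h2 : ∀ x : Fin d → ℝ, B.indicator (1 : (Fin d → ℝ) → ℝ≥0∞) x
      ≤ ENNReal.ofReal (rexp (-α * d * R) * rexp (α * ∑ i, M (x i))) := by
    intro x
    by_cases hx : x ∈ B
    · rw [Set.indicator_of_mem hx]
      have hSx : ∑ i, M (x i) ≤ d * R := hx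
      have : (1:ℝ) ≤ rexp (-α * d * R) * rexp (α * ∑ i, M (x i)) := by
        rw [← Real.exp_add]
        apply Real.one_le_exp
        nlinarith
      calc (1 : (Fin d → ℝ) → ℝ≥0∞) x = ENNReal.ofReal 1 := by simp [Pi.one_apply]
        _ ≤ _ := ENNReal.ofReal_le_ofReal this
    · rw [Set.indicator_of_notMem hx]
      exact zero_le
  calc ∫⁻ x : Fin d → ℝ, B.indicator (1 : (Fin d → ℝ) → ℝ≥0∞) x
      ≤ ∫⁻ x : Fin d → ℝ, ENNReal.ofReal (rexp (-α * d * R) * rexp (α * ∑ i, M (x i))) :=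
        lintegral_mono h2
    _ = ENNReal.ofReal (∫ x : Fin d → ℝ, rexp (-α * d * R) * rexp (α * ∑ i, M (x i))) := by
        rw [MeasureTheory.ofReal_integral_eq_lintegral_ofReal
          (((integrable_exp_S hM hα d).const_mul _))
          (ae_of_all _ (fun x => by positivity))]
    _ = ENNReal.ofReal (rexp (-α * d * R) * (Zf M α)^d) := by
        rw [integral_const_mul, integral_exp_S hM hα d]

lemma sum_sub_eq (d : ℕ) (m : ℝ) (x : Fin d → ℝ) :
    ∑ i, (M (x i) - m) = (∑ i, M (x i)) - d * m := by
  rw [Finset.sum_sub_distrib, Finset.sum_const, Finset.card_univ, Fintype.card_fin,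
    nsmul_eq_mul]

lemma core (hM : IsOrlicz M) {α m δ R V : ℝ} (hα : α < 0)
    (hm : m = Zd M α / Zf M α)
    (hV : V = Zdd M α - 2*m*Zd M α + m^2 * Zf M α)
    (hδ : 0 < δ) (hmδ : m + δ ≤ R) :
    ∃ D : ℕ, 1 ≤ D ∧ ∀ d : ℕ, D ≤ d →
      1/2 * ((Zf M α)^d * rexp (-α * d * (m - δ)))
        ≤ (volume {x : Fin d → ℝ | ∑ i, M (x i) ≤ d * R}).toReal := by
  have hZ : 0 < Zf M α := Zf_pos hM hα
  have hVpos : 0 < V := by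
    have h1 := variance_pos hM hα
    have hmZ : m * Zf M α = Zd M α := by rw [hm]; field_simp
    nlinarith [hZ]
  refine ⟨⌈(2*V)/(Zf M α * δ^2)⌉₊ + 1, le_add_self.trans (le_refl _), ?_⟩
  intro d hd
  have hd1 : 1 ≤ d := le_trans (Nat.le_add_left 1 _) hd
  have hdR : (2*V)/(Zf M α * δ^2) ≤ (d : ℝ) := by
    calc (2*V)/(Zf M α * δ^2) ≤ (⌈(2*V)/(Zf M α * δ^2)⌉₊ : ℝ) := Nat.le_ceil _
      _ ≤ (d : ℝ) := by
        exact_mod_cast Nat.cast_le.2 (le_trans (Nat.le_add_right _ 1) hd)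
  have hdpos : (0:ℝ) < d := by exact_mod_cast Nat.lt_of_lt_of_le Nat.zero_lt_one hd1
  set B := {x : Fin d → ℝ | ∑ i, M (x i) ≤ d * R} with hBdef
  set A := {x : Fin d → ℝ | |(∑ i, M (x i)) - d * m| ≤ d * δ} with hAdef
  have hBmeas : MeasurableSet B :=
    measurableSet_le (continuous_S hM d).measurable measurable_const
  have hAmeas : MeasurableSet A :=
    measurableSet_le (((continuous_S hM d).sub continuous_const).abs).measurable
      measurable_const
  have hAB : A ⊆ B := by
    intro x hx
    have hx' : |(∑ i, M (x i)) - d * m| ≤ d * δ := hx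
    have h1 : (∑ i, M (x i)) ≤ d * m + d * δ := by
      have := abs_le.1 hx'
      linarith [this.2]
    have h2 : (d:ℝ) * m + d * δ = d * (m + δ) := by ring
    have h3 : (d:ℝ) * (m + δ) ≤ d * R := mul_le_mul_of_nonneg_left hmδ hdpos.le
    show (∑ i, M (x i)) ≤ d * R
    linarith
  have hBfin : volume B < ⊤ :=
    lt_of_le_of_lt (vol_upper hM hα d) ENNReal.ofReal_lt_top
  have hAfin : volume A < ⊤ := lt_of_le_of_lt (measure_mono hAB) hBfin
  set p : (Fin d → ℝ) → ℝ := fun x => rexp (α * ∑ i, M (x i)) with hpdef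
  have hp_int : Integrable p := integrable_exp_S hM hα d
  obtain ⟨hq_int, hq_val⟩ := cheb hM hα hm hV d
  -- Markov bound on Aᶜ
  have hmarkov : ∫ x in Aᶜ, p x ≤ V * (Zf M α)^(d-1) / (d * δ^2) := by
    have hstep1 : ∫ x in Aᶜ, p x
        ≤ ∫ x in Aᶜ, (1/(d*δ)^2) * ((∑ i, (M (x i) - m))^2 * p x) := by
      apply setIntegral_mono_on hp_int.integrableOn
        ((hq_int.const_mul _).integrableOn) hAmeas.compl
      intro x hx
      have hx' : ¬ |(∑ i, M (x i)) - d * m| ≤ d * δ := hx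
      push_neg at hx'
      have h2 : (d*δ)^2 < ((∑ i, M (x i)) - d * m)^2 := by
        have habs : 0 ≤ d * δ := by positivity
        nlinarith [abs_nonneg ((∑ i, M (x i)) - d * m), sq_abs ((∑ i, M (x i)) - d * m),
          hx']
      rw [sum_sub_eq]
      have hppos : 0 < p x := exp_pos _
      rw [div_mul_eq_mul_div, le_div_iff₀ (by positivity : (0:ℝ) < (d*δ)^2)]
      nlinarith [mul_lt_mul_of_pos_right h2 hppos]
    have hstep2 : ∫ x in Aᶜ, (1/(d*δ)^2) * ((∑ i, (M (x i) - m))^2 * p x)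
        ≤ ∫ x : Fin d → ℝ, (1/(d*δ)^2) * ((∑ i, (M (x i) - m))^2 * p x) := by
      apply setIntegral_le_integral (hq_int.const_mul _)
      apply ae_of_all
      intro x
      have : 0 ≤ (∑ i, (M (x i) - m))^2 * p x := mul_nonneg (sq_nonneg _) (exp_pos _).le
      positivity
    have hstep3 : ∫ x : Fin d → ℝ, (1/(d*δ)^2) * ((∑ i, (M (x i) - m))^2 * p x)
        = V * (Zf M α)^(d-1) / (d * δ^2) := by
      rw [integral_const_mul, hq_val]
      field_simp
    linarith
  -- splitting
  have hsplit : (∫ x in A, p x) + ∫ x in Aᶜ, p x = (Zf M α)^d := by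
    rw [integral_add_compl hAmeas hp_int]
    exact integral_exp_S hM hα d
  have hhalf : (Zf M α)^d / 2 ≤ ∫ x in A, p x := by
    have hE : V * (Zf M α)^(d-1) / (d * δ^2) ≤ (Zf M α)^d / 2 := by
      obtain ⟨n, rfl⟩ : ∃ n, d = n + 1 := ⟨d - 1, (Nat.succ_pred_eq_of_pos hd1).symm⟩
      have hpow : (Zf M α)^(n+1) = (Zf M α)^n * Zf M α := pow_succ _ _
      have hred : (n + 1 + 1 : ℕ) - 1 = n + 1 := rfl
      have hZn : 0 < (Zf M α)^n := pow_pos hZ n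
      have h2V : 2 * V ≤ ((n+1 : ℕ):ℝ) * (Zf M α * δ^2) :=
        (div_le_iff₀ (by positivity)).1 hdR
      rw [Nat.add_sub_cancel, hpow]
      rw [div_le_div_iff₀ (by positivity) (by norm_num)]
      nlinarith [mul_le_mul_of_nonneg_right h2V hZn.le, hZn, hδ, hZ]
    linarith
  have honA : ∫ x in A, p x ≤ rexp (α * d * (m - δ)) * (volume A).toReal := by
    have hconst : ∫ x in A, rexp (α * d * (m - δ))
        = (volume A).toReal * rexp (α * d * (m - δ)) := by
      rw [setIntegral_const, smul_eq_mul, measureReal_def]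
    have hmono : ∫ x in A, p x ≤ ∫ x in A, rexp (α * d * (m - δ)) := by
      apply setIntegral_mono_on hp_int.integrableOn
        (integrableOn_const hAfin.ne) hAmeas
      intro x hx
      have hx' : |(∑ i, M (x i)) - d * m| ≤ d * δ := hx
      have h1 : (d:ℝ) * (m - δ) ≤ ∑ i, M (x i) := by
        have := (abs_le.1 hx').1
        linarith
      apply exp_le_exp.2
      calc α * ∑ i, M (x i) ≤ α * ((d:ℝ) * (m - δ)) :=
            mul_le_mul_of_nonpos_left h1 hα.le
        _ = α * d * (m - δ) := by ring
    linarith [hconst, hmono]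
  have hkey : (Zf M α)^d / 2 * rexp (-α * d * (m - δ)) ≤ (volume A).toReal := by
    have h1 : (Zf M α)^d / 2 ≤ rexp (α * d * (m - δ)) * (volume A).toReal :=
      le_trans hhalf honA
    have h2 := mul_le_mul_of_nonneg_right h1 (exp_pos (-α * d * (m - δ))).le
    have h3 : rexp (α * d * (m - δ)) * (volume A).toReal * rexp (-α * d * (m - δ))
        = (volume A).toReal := by
      rw [mul_comm (rexp (α * d * (m - δ))), mul_assoc, ← Real.exp_add,
        show α * d * (m - δ) + -α * d * (m - δ) = 0 by ring, Real.exp_zero, mul_one]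
    rw [h3] at h2
    exact h2
  have hABr : (volume A).toReal ≤ (volume B).toReal :=
    ENNReal.toReal_mono hBfin.ne (measure_mono hAB)
  calc 1/2 * ((Zf M α)^d * rexp (-α * d * (m - δ)))
      = (Zf M α)^d / 2 * rexp (-α * d * (m - δ)) := by ring
    _ ≤ (volume A).toReal := hkey
    _ ≤ (volume B).toReal := hABr

theorem stmt12 (R : ℝ) (hR : 0 < R) (M : ℝ → ℝ) (hM : IsOrlicz M)
    (φ : ℝ → ℝ) (hφ : ∀ α, φ α = Real.log (∫ x : ℝ, Real.exp (α * M x)))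
    (αs : ℝ) (hαs : αs < 0) (hder : deriv φ αs = R) :
    Tendsto (fun d : ℕ =>
        (1 / d : ℝ) * Real.log (volume {x : Fin d → ℝ | ∑ i, M (x i) ≤ d * R}).toReal)
      atTop (nhds (φ αs - αs * R)) ∧
    Tendsto (fun d : ℕ =>
        ((volume {x : Fin d → ℝ | ∑ i, M (x i) ≤ d * R}).toReal) ^ (1 / d : ℝ))
      atTop (nhds (Real.exp (φ αs - αs * R))) := by
  have hZs : 0 < Zf M αs := Zf_pos hM hαs
  have hφd : HasDerivAt φ (Zd M αs / Zf M αs) αs := hasDerivAt_phi hM hφ hαs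
  have hψR : Zd M αs / Zf M αs = R := by rw [← hφd.deriv]; exact hder
  set c : ℝ := φ αs - αs * R with hc
  set v : ℕ → ℝ :=
    fun d => (volume {x : Fin d → ℝ | ∑ i, M (x i) ≤ d * R}).toReal with hv
  -- upper bound
  have hupper : ∀ d : ℕ, v d ≤ rexp (d * c) := by
    intro d
    have h1 := vol_upper hM (R := R) hαs d
    have h2 : rexp (-αs * d * R) * (Zf M αs)^d = rexp ((d:ℝ) * c) := by
      have hpow : (Zf M αs)^d = rexp ((d:ℝ) * Real.log (Zf M αs)) := by
        rw [Real.exp_nat_mul, Real.exp_log hZs]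
      rw [hpow, ← Real.exp_add, hc, hφ αs]
      have hZfeq : Real.log (∫ x : ℝ, rexp (αs * M x)) = Real.log (Zf M αs) := rfl
      rw [hZfeq]
      congr 1
      ring
    rw [hv]
    rw [h2] at h1
    exact ENNReal.toReal_le_of_le_ofReal (exp_pos _).le h1
  -- lower bound
  have hψcont : ContinuousAt (fun β => Zd M β / Zf M β) αs :=
    (hasDerivAt_psi hM hαs).continuousAt
  have hφcont : ContinuousAt φ αs := hφd.continuousAt
  set L : ℝ → ℝ :=
    fun β => φ β - β * ((Zd M β / Zf M β) - (R - Zd M β / Zf M β)/2) with hL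
  have hLcont : ContinuousAt L αs := by
    apply ContinuousAt.sub hφcont
    apply ContinuousAt.mul continuousAt_id
    exact hψcont.sub ((continuousAt_const.sub hψcont).div_const 2)
  have hLval : L αs = c := by
    rw [hL]
    simp only
    rw [hψR, hc]
    ring
  have hlow : ∀ ε : ℝ, 0 < ε → ∃ N : ℕ, 1 ≤ N ∧ ∀ d : ℕ, N ≤ d →
      0 < v d ∧ c - ε < (1 / d : ℝ) * Real.log (v d) := by
    intro ε hε
    -- pick α < αs with |L α - c| < ε/2
    have hev : ∀ᶠ β in nhdsWithin αs (Set.Iio αs), |L β - c| < ε/2 := by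
      have h0 : Tendsto L (nhds αs) (nhds c) := hLval ▸ hLcont.tendsto
      have h1 := (Metric.tendsto_nhds.1 h0) (ε/2) (by positivity)
      simp only [Real.dist_eq] at h1
      exact h1.filter_mono nhdsWithin_le_nhds
    obtain ⟨α, hLα, hακ⟩ := (hev.and eventually_mem_nhdsWithin).exists
    have hακ' : α < αs := hακ
    have hα0 : α < 0 := lt_trans hακ' hαs
    set m : ℝ := Zd M α / Zf M α with hm
    have hmR : m < R := by
      have := psi_strictMono hM (Set.mem_Iio.2 hα0) (Set.mem_Iio.2 hαs) hακ'
      simp only at this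
      rw [hψR] at this
      exact this
    set δ : ℝ := (R - m)/2 with hδdef
    have hδ : 0 < δ := by rw [hδdef]; linarith
    have hmδ : m + δ ≤ R := by rw [hδdef]; linarith
    obtain ⟨D, hD1, hDbound⟩ := core hM hα0 hm rfl hδ hmδ
    set N₂ : ℕ := ⌈2 * Real.log 2 / ε⌉₊ + 1 with hN₂
    refine ⟨max D N₂, le_trans hD1 (le_max_left _ _), ?_⟩
    intro d hd
    have hdD : D ≤ d := le_trans (le_max_left _ _) hd
    have hd1 : 1 ≤ d := le_trans hD1 hdD
    have hdpos : (0:ℝ) < d := by exact_mod_cast Nat.lt_of_lt_of_le Nat.zero_lt_one hd1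
    have hZα : 0 < Zf M α := Zf_pos hM hα0
    have hlb := hDbound d hdD
    have hlbpos : 0 < 1/2 * ((Zf M α)^d * rexp (-α * d * (m - δ))) := by positivity
    constructor
    · exact lt_of_lt_of_le hlbpos hlb
    · have hvpos : 0 < v d := lt_of_lt_of_le hlbpos hlb
      have hlog : Real.log (1/2 * ((Zf M α)^d * rexp (-α * d * (m - δ))))
          ≤ Real.log (v d) := Real.log_le_log hlbpos hlb
      have hcompute : Real.log (1/2 * ((Zf M α)^d * rexp (-α * d * (m - δ))))
          = -Real.log 2 + d * L α := by
        rw [Real.log_mul (by norm_num) (by positivity),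
          Real.log_mul (by positivity) (exp_pos _).ne', Real.log_pow, Real.log_exp]
        have hφα : φ α = Real.log (Zf M α) := hφ α
        rw [hL]
        simp only
        rw [hφα, ← hm]
        have : Real.log (1/2) = -Real.log 2 := by
          rw [one_div, Real.log_inv]
        rw [this]
        ring
      have hlog2 : -Real.log 2 + d * L α ≤ Real.log (v d) := by
        rw [← hcompute]; exact hlog
      have hLα2 : c - ε/2 < L α := by
        have := abs_lt.1 hLα
        linarith [this.1]
      have hN₂d : (2 * Real.log 2 / ε) < d := by
        have h1 : (⌈2 * Real.log 2 / ε⌉₊ : ℝ) < d := by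
          have : N₂ ≤ d := le_trans (le_max_right _ _) hd
          have h2 : (⌈2 * Real.log 2 / ε⌉₊ + 1 : ℕ) ≤ d := this
          exact_mod_cast Nat.lt_of_lt_of_le (Nat.lt_succ_self _) h2
        linarith [Nat.le_ceil (2 * Real.log 2 / ε)]
      have h2log : 2 * Real.log 2 < ε * (d:ℝ) := by
        have := (div_lt_iff₀ hε).1 hN₂d
        linarith
      have hmul := mul_le_mul_of_nonneg_left hlog2
        (by positivity : (0:ℝ) ≤ 1/(d:ℝ))
      have hid : (1/(d:ℝ)) * (-Real.log 2 + d * L α) = L α - Real.log 2 / d := by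
        field_simp
        ring
      rw [hid] at hmul
      have hlogd : Real.log 2 / d < ε/2 := by
        rw [div_lt_iff₀ hdpos]
        linarith
      calc c - ε = (c - ε/2) - ε/2 := by ring
        _ < L α - Real.log 2 / d := by linarith
        _ ≤ (1/d : ℝ) * Real.log (v d) := hmul
  -- conclusion 1
  have hconc1 : Tendsto (fun d : ℕ => (1 / d : ℝ) * Real.log (v d)) atTop (nhds c) := by
    rw [Metric.tendsto_atTop]
    intro ε hε
    obtain ⟨N, hN1, hN⟩ := hlow (ε/2) (by positivity)
    refine ⟨N, fun d hd => ?_⟩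
    obtain ⟨hvpos, hlower⟩ := hN d hd
    have hd1 : 1 ≤ d := le_trans hN1 hd
    have hdpos : (0:ℝ) < d := by exact_mod_cast Nat.lt_of_lt_of_le Nat.zero_lt_one hd1
    have hup : (1 / d : ℝ) * Real.log (v d) ≤ c := by
      have h1 : Real.log (v d) ≤ (d:ℝ) * c := by
        calc Real.log (v d) ≤ Real.log (rexp ((d:ℝ) * c)) :=
              Real.log_le_log hvpos (hupper d)
          _ = (d:ℝ) * c := Real.log_exp _
      calc (1 / d : ℝ) * Real.log (v d) ≤ (1 / d : ℝ) * ((d:ℝ) * c) := by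
            exact mul_le_mul_of_nonneg_left h1 (by positivity)
        _ = c := by field_simp
    rw [Real.dist_eq, abs_lt]
    constructor
    · linarith
    · linarith [hε]
  refine ⟨hconc1, ?_⟩
  -- conclusion 2
  have hcomp : Tendsto (fun d : ℕ => rexp ((1 / d : ℝ) * Real.log (v d))) atTop
      (nhds (rexp c)) := (Real.continuous_exp.tendsto c).comp hconc1
  apply hcomp.congr'
  obtain ⟨N, hN1, hN⟩ := hlow 1 one_pos
  rw [eventuallyEq_iff_exists_mem]
  refine ⟨{d : ℕ | N ≤ d}, mem_atTop N, ?_⟩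
  intro d hd
  have hvpos : 0 < v d := (hN d hd).1
  show rexp ((1 / d : ℝ) * Real.log (v d)) = (v d) ^ (1 / d : ℝ)
  rw [Real.rpow_def_of_pos hvpos, mul_comm]
end

section
/- Let M_1, M_2 be Orlicz functions, R_1, R_2 ∈ (0,∞), φ_1(α) = log ∫_ℝ exp(α·M_1(x)) dx, α* < 0 with φ_1'(α*) = R_1, and p_1(x) = exp(α*·M_1(x) - φ_1(α*)). If ∫_ℝ M_2(x)·p_1(x) dx > R_2, then the ratio vol_d(B_{M_1}^d(dR_1) ∩ B_{M_2}^d(dR_2)) / vol_d(B_{M_1}^d(dR_1)) converges to 0 as d → ∞. -/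
open MeasureTheory Filter

open Real Set Topology

set_option maxHeartbeats 1000000

namespace Stmt14Aux

lemma orlicz_nonneg {M : ℝ → ℝ} (hM : IsOrlicz M) (t : ℝ) : 0 ≤ M t := by
  rcases eq_or_ne t 0 with h | h
  · simp [h, hM.2.2.1]
  · exact (hM.2.2.2 t h).le

lemma orlicz_cont {M : ℝ → ℝ} (hM : IsOrlicz M) : Continuous M := by
  have := hM.1.continuousOn isOpen_univ
  rw [← continuousOn_univ]; exact this

lemma orlicz_abs {M : ℝ → ℝ} (hM : IsOrlicz M) (x : ℝ) : M |x| = M x := by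
  rcases abs_cases x with ⟨h, _⟩ | ⟨h, _⟩
  · rw [h]
  · rw [h, hM.2.1]

lemma orlicz_mono {M : ℝ → ℝ} (hM : IsOrlicz M) {x y : ℝ} (hx : 0 ≤ x) (hxy : x ≤ y) :
    M x ≤ M y := by
  rcases eq_or_lt_of_le (hx.trans hxy) with h | hy
  · have hx0 : x = 0 := le_antisymm (hxy.trans h.symm.le) hx
    rw [hx0, ← h]
  · have hdy : x / y ≤ 1 := (div_le_one hy).2 hxy
    have ha : (0:ℝ) ≤ 1 - x / y := by linarith
    have hb : (0:ℝ) ≤ x / y := by positivity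
    have hab : (1 - x / y) + x / y = 1 := by ring
    have h1 := hM.1.2 (Set.mem_univ (0:ℝ)) (Set.mem_univ y) ha hb hab
    have hxy' : (1 - x / y) • (0:ℝ) + (x / y) • y = x := by
      simp only [smul_eq_mul]; field_simp; ring
    rw [hxy'] at h1
    simp only [smul_eq_mul, hM.2.2.1, mul_zero, zero_add] at h1
    have hMy := orlicz_nonneg hM y
    nlinarith

lemma orlicz_growth {M : ℝ → ℝ} (hM : IsOrlicz M) {x : ℝ} (hx : 1 ≤ x) :
    M 1 * x ≤ M x := by
  rcases eq_or_lt_of_le hx with h | hx1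
  · rw [← h]; ring_nf; exact le_rfl
  have hx0 : 0 < x := by linarith
  have ha : (0:ℝ) ≤ 1 - 1 / x := by
    have : 1 / x ≤ 1 := by rw [div_le_one hx0]; linarith
    linarith
  have hb : (0:ℝ) ≤ 1 / x := by positivity
  have hab : (1 - 1 / x) + 1 / x = 1 := by ring
  have h1 := hM.1.2 (Set.mem_univ (0:ℝ)) (Set.mem_univ x) ha hb hab
  have hx' : (1 - 1 / x) • (0:ℝ) + (1 / x) • x = 1 := by
    simp only [smul_eq_mul]; field_simp; ring
  rw [hx'] at h1
  simp only [smul_eq_mul, hM.2.2.1, mul_zero, zero_add] at h1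
  have h2 : M 1 * x ≤ (1 / x * M x) * x := by nlinarith
  calc M 1 * x ≤ (1 / x * M x) * x := h2
  _ = M x := by field_simp

lemma orlicz_growth_abs {M : ℝ → ℝ} (hM : IsOrlicz M) {x : ℝ} (hx : 1 ≤ |x|) :
    M 1 * |x| ≤ M x := by
  rw [← orlicz_abs hM x]; exact orlicz_growth hM hx

lemma orlicz_abs_le {M : ℝ → ℝ} (hM : IsOrlicz M) {x c : ℝ} (h : M x ≤ c) :
    |x| ≤ max 1 (c / M 1) := by
  rcases le_or_gt |x| 1 with h1 | h1
  · exact h1.trans (le_max_left _ _)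
  · refine le_trans ?_ (le_max_right _ _)
    have hM1 : 0 < M 1 := hM.2.2.2 1 one_ne_zero
    rw [le_div_iff₀ hM1]
    have := orlicz_growth_abs hM h1.le
    nlinarith

lemma integrable_exp_abs {c : ℝ} (hc : c < 0) :
    Integrable (fun x : ℝ => Real.exp (c * |x|)) := by
  have hc' : 0 < -c := by linarith
  have hIoi : IntegrableOn (fun x : ℝ => Real.exp (c * |x|)) (Ioi (0:ℝ)) := by
    have := exp_neg_integrableOn_Ioi 0 hc'
    apply this.congr_fun ?_ measurableSet_Ioi
    intro x hx
    rw [Set.mem_Ioi] at hx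
    show Real.exp (- -c * x) = Real.exp (c * |x|)
    rw [abs_of_pos hx]; ring_nf
  rw [← integrableOn_univ, ← @Iio_union_Ici _ _ (0 : ℝ), integrableOn_union,
    integrableOn_Ici_iff_integrableOn_Ioi]
  refine ⟨?_, hIoi⟩
  rw [← (Measure.measurePreserving_neg (volume : Measure ℝ)).integrableOn_comp_preimage
      (Homeomorph.neg ℝ).measurableEmbedding]
  simp only [Function.comp_def, abs_neg, neg_preimage, neg_Iio, neg_zero]
  exact hIoi

lemma integrable_exp_orlicz {M : ℝ → ℝ} (hM : IsOrlicz M) {t : ℝ} (ht : t < 0) :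
    Integrable (fun x : ℝ => Real.exp (t * M x)) := by
  have hM1 : 0 < M 1 := hM.2.2.2 1 one_ne_zero
  have hc : t * M 1 < 0 := mul_neg_of_neg_of_pos ht hM1
  have hg : Integrable (fun x : ℝ => Real.exp (-(t * M 1)) * Real.exp ((t * M 1) * |x|)) :=
    (integrable_exp_abs hc).const_mul _
  refine hg.mono' ?_ ?_
  · exact (Real.continuous_exp.comp ((continuous_const.mul (orlicz_cont hM)))).aestronglyMeasurable
  · refine Filter.Eventually.of_forall fun x => ?_
    rw [Real.norm_eq_abs, abs_of_pos (Real.exp_pos _), ← Real.exp_add]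
    apply Real.exp_le_exp.2
    rcases le_or_gt |x| 1 with h1 | h1
    · have h2 : t * M x ≤ 0 :=
        mul_nonpos_of_nonpos_of_nonneg ht.le (orlicz_nonneg hM x)
      nlinarith
    · have h2 : M 1 * |x| ≤ M x := orlicz_growth_abs hM h1.le
      nlinarith


lemma key_strict {M : ℝ → ℝ} (hM : IsOrlicz M) {s u : ℝ} (hsu : s < u) (hu : u < 0) :
    (∫ x : ℝ, Real.exp (((s + u) / 2) * M x)) ^ 2
      < (∫ x : ℝ, Real.exp (s * M x)) * ∫ x : ℝ, Real.exp (u * M x) := by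
  have hs0 : s < 0 := hsu.trans hu
  have hm0 : (s + u) / 2 < 0 := by linarith
  set m := (s + u) / 2 with hm
  have If : Integrable (fun x : ℝ => Real.exp (s * M x)) := integrable_exp_orlicz hM hs0
  have Ig : Integrable (fun x : ℝ => Real.exp (u * M x)) := integrable_exp_orlicz hM hu
  have Ih : Integrable (fun x : ℝ => Real.exp (m * M x)) := integrable_exp_orlicz hM hm0
  set μ := (volume : Measure ℝ).prod (volume : Measure ℝ) with hμ
  have IFG : Integrable (fun p : ℝ × ℝ => Real.exp (s * M p.1) * Real.exp (u * M p.2)) μ :=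
    If.mul_prod Ig
  have IGF : Integrable (fun p : ℝ × ℝ => Real.exp (u * M p.1) * Real.exp (s * M p.2)) μ :=
    Ig.mul_prod If
  have IHH : Integrable (fun p : ℝ × ℝ => Real.exp (m * M p.1) * Real.exp (m * M p.2)) μ :=
    Ih.mul_prod Ih
  set D : ℝ × ℝ → ℝ := fun p =>
    Real.exp (s * M p.1) * Real.exp (u * M p.2) + Real.exp (u * M p.1) * Real.exp (s * M p.2)
      - 2 * (Real.exp (m * M p.1) * Real.exp (m * M p.2)) with hD
  have ID : Integrable D μ := (IFG.add IGF).sub (IHH.const_mul 2)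
  have hDval : ∀ p : ℝ × ℝ, D p =
      (Real.exp ((s * M p.1 + u * M p.2) / 2) - Real.exp ((u * M p.1 + s * M p.2) / 2)) ^ 2 := by
    intro p
    have h1 : Real.exp ((s * M p.1 + u * M p.2) / 2) ^ 2
        = Real.exp (s * M p.1) * Real.exp (u * M p.2) := by
      rw [sq, ← Real.exp_add, ← Real.exp_add]; congr 1; ring
    have h2 : Real.exp ((u * M p.1 + s * M p.2) / 2) ^ 2
        = Real.exp (u * M p.1) * Real.exp (s * M p.2) := by
      rw [sq, ← Real.exp_add, ← Real.exp_add]; congr 1; ring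
    have h3 : Real.exp ((s * M p.1 + u * M p.2) / 2) * Real.exp ((u * M p.1 + s * M p.2) / 2)
        = Real.exp (m * M p.1) * Real.exp (m * M p.2) := by
      rw [← Real.exp_add, ← Real.exp_add]; congr 1; rw [hm]; ring
    rw [sub_sq, h1, h2, mul_assoc, h3, hD]; ring
  have hDnn : 0 ≤ D := fun p => by rw [hDval p]; positivity
  have hID : ∫ p, D p ∂μ =
      2 * ((∫ x : ℝ, Real.exp (s * M x)) * (∫ x : ℝ, Real.exp (u * M x))
        - (∫ x : ℝ, Real.exp (m * M x)) ^ 2) := by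
    have e1 : ∫ p, D p ∂μ = ∫ p : ℝ × ℝ,
        ((Real.exp (s * M p.1) * Real.exp (u * M p.2)
          + Real.exp (u * M p.1) * Real.exp (s * M p.2))
          - 2 * (Real.exp (m * M p.1) * Real.exp (m * M p.2))) ∂μ := rfl
    have IS : Integrable (fun p : ℝ × ℝ => Real.exp (s * M p.1) * Real.exp (u * M p.2)
          + Real.exp (u * M p.1) * Real.exp (s * M p.2)) μ := IFG.add IGF
    have IC : Integrable (fun p : ℝ × ℝ =>
          2 * (Real.exp (m * M p.1) * Real.exp (m * M p.2))) μ := IHH.const_mul 2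
    rw [e1, integral_sub IS IC, integral_add IFG IGF,
      integral_const_mul, hμ,
      integral_prod_mul (f := fun x : ℝ => Real.exp (s * M x)) (g := fun x : ℝ => Real.exp (u * M x)),
      integral_prod_mul (f := fun x : ℝ => Real.exp (u * M x)) (g := fun x : ℝ => Real.exp (s * M x)),
      integral_prod_mul (f := fun x : ℝ => Real.exp (m * M x)) (g := fun x : ℝ => Real.exp (m * M x))]
    ring
  -- positive lower bound
  set a := M 1 with haa
  have ha : 0 < a := hM.2.2.2 1 one_ne_zero
  obtain ⟨r, hr0, hrM⟩ : ∃ r > 0, ∀ x : ℝ, |x| < r → M x < a := by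
    have hc : ContinuousAt M 0 := (orlicz_cont hM).continuousAt
    rw [Metric.continuousAt_iff] at hc
    obtain ⟨δ, hδ0, hδ⟩ := hc a ha
    refine ⟨δ, hδ0, fun x hx => ?_⟩
    have := hδ (x := x) (by simpa [Real.dist_eq] using hx)
    rw [Real.dist_eq, hM.2.2.1, sub_zero] at this
    calc M x ≤ |M x| := le_abs_self _
    _ < a := this
  set T := M 3 with hT
  set ρ := (u - s) * a / 2 with hρ
  have hρ0 : 0 < ρ := by rw [hρ]; nlinarith
  set L := s * (a + T) / 2 with hL
  set κ := (Real.exp L * (Real.exp ρ - 1)) ^ 2 with hκdef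
  have hexpρ : 1 < Real.exp ρ := Real.one_lt_exp_iff.2 hρ0
  have hκ0 : 0 < Real.exp L * (Real.exp ρ - 1) := by
    have := Real.exp_pos L; nlinarith
  have hκ : 0 < κ := by rw [hκdef]; positivity
  -- bound D from below on U ×ˢ V
  set U : Set ℝ := Ioo (-r) r with hU
  set V : Set ℝ := Ioo (2:ℝ) 3 with hV
  have hbound : ∀ p ∈ U ×ˢ V, κ ≤ D p := by
    rintro ⟨x, y⟩ ⟨hx, hy⟩
    simp only [hU, hV, mem_Ioo] at hx hy
    have hMx : M x < a := hrM x (abs_lt.2 ⟨hx.1, hx.2⟩)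
    have hMxnn : 0 ≤ M x := orlicz_nonneg hM x
    have hy1 : (1:ℝ) ≤ y := by linarith [hy.1]
    have hMy2 : 2 * a ≤ M y := by
      have h1 := orlicz_growth hM hy1
      nlinarith [hy.1, ha]
    have hMyT : M y ≤ T := orlicz_mono hM (by linarith) (by linarith [hy.2])
    set A := (s * M x + u * M y) / 2 with hA
    set B := (u * M x + s * M y) / 2 with hB
    have hAB : ρ ≤ A - B := by
      rw [hA, hB, hρ]
      have h1 : a ≤ M y - M x := by linarith
      nlinarith
    have hLB : L ≤ B := by
      rw [hB, hL]
      have h1 : u * M x ≥ s * M x := by nlinarith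
      have h2 : s * M x ≥ s * a := by nlinarith
      have h3 : s * M y ≥ s * T := by nlinarith
      linarith
    have hDp : D (x, y) = (Real.exp A - Real.exp B) ^ 2 := hDval (x, y)
    rw [hDp, hκdef]
    have h4 : Real.exp L * (Real.exp ρ - 1) ≤ Real.exp A - Real.exp B := by
      have h5 : Real.exp B * (Real.exp (A - B) - 1) = Real.exp A - Real.exp B := by
        rw [mul_sub, ← Real.exp_add]; ring_nf
      have h6 : Real.exp ρ ≤ Real.exp (A - B) := Real.exp_le_exp.2 hAB
      have h7 : Real.exp L ≤ Real.exp B := Real.exp_le_exp.2 hLB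
      nlinarith [Real.exp_pos B, Real.exp_pos L]
    have h8 : 0 ≤ Real.exp L * (Real.exp ρ - 1) := hκ0.le
    nlinarith
  have hUVmeas : MeasurableSet (U ×ˢ V) := (measurableSet_Ioo).prod measurableSet_Ioo
  have hUVvol : μ (U ×ˢ V) = ENNReal.ofReal (2 * r) := by
    rw [hμ, Measure.prod_prod, hU, hV, Real.volume_Ioo, Real.volume_Ioo,
      ← ENNReal.ofReal_mul (by linarith)]
    congr 1; ring
  have hUVne : μ (U ×ˢ V) ≠ ⊤ := by rw [hUVvol]; exact ENNReal.ofReal_ne_top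
  have hstep : κ * (2 * r) ≤ ∫ p in U ×ˢ V, D p ∂μ := by
    have := setIntegral_ge_of_const_le_real hUVmeas hUVne hbound ID.integrableOn
    rwa [measureReal_def, hUVvol, ENNReal.toReal_ofReal (by linarith)] at this
  have hstep2 : ∫ p in U ×ˢ V, D p ∂μ ≤ ∫ p, D p ∂μ :=
    setIntegral_le_integral ID (Filter.Eventually.of_forall hDnn)
  have hfin : 0 < κ * (2 * r) := by positivity
  nlinarith [hID, hstep, hstep2]


lemma slope_le_of_midpoint (φ : ℝ → ℝ) (c R : ℝ) (hd : HasDerivAt φ R c)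
    (hmid : ∀ s, s < c → φ ((s + c) / 2) ≤ (φ s + φ c) / 2) :
    ∀ x, x < c → (φ c - φ x) / (c - x) ≤ R := by
  intro x hx
  set seq : ℕ → ℝ := fun n => c - (c - x) / 2 ^ n with hseq
  have hpos : ∀ n : ℕ, (0:ℝ) < (c - x) / 2 ^ n := by
    intro n; have : (0:ℝ) < c - x := by linarith
    positivity
  have hlt : ∀ n, seq n < c := fun n => by
    have := hpos n; simp only [hseq]; linarith
  have hval : ∀ n, c - seq n = (c - x) / 2 ^ n := fun n => by simp [hseq]
  have hmono : ∀ n, (φ c - φ (seq n)) / (c - seq n) ≤ (φ c - φ (seq (n+1))) / (c - seq (n+1)) := by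
    intro n
    have h2 : seq (n+1) = (seq n + c) / 2 := by
      simp only [hseq]; rw [pow_succ]; field_simp; ring
    have h3 := hmid (seq n) (hlt n)
    rw [← h2] at h3
    rw [hval n, hval (n+1)]
    rw [div_le_div_iff₀ (hpos n) (hpos (n+1))]
    have h6 : (c - x) / 2 ^ (n+1) = ((c - x) / 2 ^ n) / 2 := by
      rw [pow_succ]; field_simp
    rw [h6]
    have h7 := hpos n
    nlinarith
  have hchain : ∀ n, (φ c - φ x) / (c - x) ≤ (φ c - φ (seq n)) / (c - seq n) := by
    intro n
    induction n with
    | zero =>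
      have h0 : seq 0 = x := by simp [hseq]
      rw [h0]
    | succ n ih => exact ih.trans (hmono n)
  have h1 : Tendsto seq atTop (𝓝 c) := by
    have h2 : Tendsto (fun n : ℕ => (c - x) * (1/2:ℝ) ^ n) atTop (𝓝 0) := by
      simpa using (tendsto_pow_atTop_nhds_zero_of_lt_one (r := (1/2:ℝ)) (by norm_num) (by norm_num)).const_mul (c - x)
    have h3 : seq = fun n => c - (c - x) * (1/2:ℝ) ^ n := by
      funext n; simp only [hseq, div_pow, one_pow]; ring
    rw [h3]
    simpa using tendsto_const_nhds.sub h2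
  have h2 := hasDerivAt_iff_tendsto_slope.1 hd
  have h3 : Tendsto seq atTop (𝓝[≠] c) :=
    tendsto_nhdsWithin_of_tendsto_nhds_of_eventually_within seq h1
      (Eventually.of_forall fun n => (hlt n).ne)
  have h4 := h2.comp h3
  have h5 : (fun n => slope φ c (seq n)) = fun n => (φ c - φ (seq n)) / (c - seq n) := by
    funext n
    rw [slope_def_field]
    rw [← neg_sub (φ (seq n)), ← neg_sub (seq n) c, neg_div_neg_eq]
  rw [show (slope φ c ∘ seq) = fun n => slope φ c (seq n) from rfl, h5] at h4
  exact ge_of_tendsto h4 (Eventually.of_forall hchain)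

lemma line_lt_of_midpoint (φ : ℝ → ℝ) (c R : ℝ) (hd : HasDerivAt φ R c)
    (hmid : ∀ s, s < c → φ ((s + c) / 2) < (φ s + φ c) / 2) :
    ∀ x, x < c → φ c + (x - c) * R < φ x := by
  have hle : ∀ x, x < c → φ c + (x - c) * R ≤ φ x := by
    intro x hx
    have := slope_le_of_midpoint φ c R hd (fun s hs => (hmid s hs).le) x hx
    rw [div_le_iff₀ (by linarith : (0:ℝ) < c - x)] at this
    linarith
  intro x hx
  have hmx : (x + c) / 2 < c := by linarith
  have h1 := hle _ hmx
  have h2 := hmid x hx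
  by_contra hcon
  push_neg at hcon
  have h3 : (x + c) / 2 - c = (x - c) / 2 := by ring
  rw [h3] at h1
  linarith


lemma integrable_exp_pair {M₁ M₂ : ℝ → ℝ} (hM₁ : IsOrlicz M₁) (hM₂ : IsOrlicz M₂)
    {t b : ℝ} (ht : t < 0) (hb : b ≤ 0) :
    Integrable (fun x : ℝ => Real.exp (t * M₁ x + b * M₂ x)) := by
  refine (integrable_exp_orlicz hM₁ ht).mono' ?_ ?_
  · exact (Real.continuous_exp.comp (((continuous_const.mul (orlicz_cont hM₁))).add
      ((continuous_const.mul (orlicz_cont hM₂))))).aestronglyMeasurable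
  · refine Filter.Eventually.of_forall fun x => ?_
    rw [Real.norm_eq_abs, abs_of_pos (Real.exp_pos _)]
    apply Real.exp_le_exp.2
    have := orlicz_nonneg hM₂ x
    nlinarith

lemma exists_beta {M₁ M₂ : ℝ → ℝ} (hM₁ : IsOrlicz M₁) (hM₂ : IsOrlicz M₂) {αs : ℝ}
    (hαs : αs < 0) {R₂ : ℝ} (hR₂ : 0 < R₂)
    (hint : Integrable (fun x : ℝ => M₂ x * Real.exp (αs * M₁ x)))
    (hI : R₂ * (∫ x : ℝ, Real.exp (αs * M₁ x)) < ∫ x : ℝ, M₂ x * Real.exp (αs * M₁ x)) :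
    ∃ β : ℝ, β < 0 ∧ (∫ x : ℝ, Real.exp (αs * M₁ x + β * M₂ x))
      < Real.exp (β * R₂) * ∫ x : ℝ, Real.exp (αs * M₁ x) := by
  have hZint : Integrable (fun x : ℝ => Real.exp (αs * M₁ x)) := integrable_exp_orlicz hM₁ hαs
  have hZpos : 0 < ∫ x : ℝ, Real.exp (αs * M₁ x) := MeasureTheory.integral_exp_pos hZint
  set Z := ∫ x : ℝ, Real.exp (αs * M₁ x) with hZ
  set b : ℕ → ℝ := fun n => -(1 / (n + 1)) with hbdef
  have hb : ∀ n : ℕ, b n < 0 := by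
    intro n; rw [hbdef]
    simp only [neg_neg, neg_lt, neg_zero]
    positivity
  set F : ℕ → ℝ → ℝ :=
    fun n x => (Real.exp (b n * M₂ x) - 1) / (b n) * Real.exp (αs * M₁ x) with hF
  have hq : ∀ (a : ℝ), a < 0 → ∀ (m : ℝ), 0 ≤ m →
      0 ≤ (Real.exp (a * m) - 1) / a ∧ (Real.exp (a * m) - 1) / a ≤ m := by
    intro a ha m hm
    constructor
    · apply div_nonneg_of_nonpos _ ha.le
      have : Real.exp (a * m) ≤ 1 := Real.exp_le_one_iff.2 (mul_nonpos_of_nonpos_of_nonneg ha.le hm)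
      linarith
    · rw [div_le_iff_of_neg ha]
      have := Real.add_one_le_exp (a * m)
      nlinarith
  have hFmeas : ∀ n, AEStronglyMeasurable (F n) volume := by
    intro n
    exact (((Real.continuous_exp.comp (continuous_const.mul (orlicz_cont hM₂))).sub
      continuous_const).div_const _ |>.mul
      (Real.continuous_exp.comp (continuous_const.mul (orlicz_cont hM₁)))).aestronglyMeasurable
  have hbnd : ∀ n, ∀ᵐ x : ℝ, ‖F n x‖ ≤ M₂ x * Real.exp (αs * M₁ x) := by
    intro n
    refine Filter.Eventually.of_forall fun x => ?_
    obtain ⟨h1, h2⟩ := hq (b n) (hb n) (M₂ x) (orlicz_nonneg hM₂ x)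
    rw [hF]
    rw [norm_mul, Real.norm_eq_abs, Real.norm_eq_abs, abs_of_nonneg h1,
      abs_of_pos (Real.exp_pos _)]
    have := Real.exp_pos (αs * M₁ x)
    nlinarith
  have htend : ∀ᵐ x : ℝ, Tendsto (fun n => F n x) atTop (𝓝 (M₂ x * Real.exp (αs * M₁ x))) := by
    refine Filter.Eventually.of_forall fun x => ?_
    have hder : HasDerivAt (fun t : ℝ => Real.exp (t * M₂ x)) (M₂ x) 0 := by
      have h := ((hasDerivAt_id (0:ℝ)).mul_const (M₂ x)).exp
      simpa using h
    have h2 := hasDerivAt_iff_tendsto_slope.1 hder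
    have hb0 : Tendsto b atTop (𝓝[≠] (0:ℝ)) := by
      apply tendsto_nhdsWithin_of_tendsto_nhds_of_eventually_within
      · rw [hbdef]
        simpa using (tendsto_one_div_add_atTop_nhds_zero_nat (𝕜 := ℝ)).neg
      · exact Eventually.of_forall fun n => (hb n).ne
    have h3 := h2.comp hb0
    have h4 : (slope (fun t : ℝ => Real.exp (t * M₂ x)) 0 ∘ b)
        = fun n => (Real.exp (b n * M₂ x) - 1) / (b n) := by
      funext n
      simp [slope_def_field]
    rw [h4] at h3
    simpa [hF] using h3.mul_const (Real.exp (αs * M₁ x))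
  have hDCT := tendsto_integral_of_dominated_convergence _ hFmeas hint hbnd htend
  have hev := hDCT.eventually_const_lt hI
  obtain ⟨n, hn⟩ := hev.exists
  refine ⟨b n, hb n, ?_⟩
  have hIcomb : Integrable (fun x : ℝ => Real.exp (αs * M₁ x + b n * M₂ x)) :=
    integrable_exp_pair hM₁ hM₂ hαs (hb n).le
  have hFeq : ∀ x : ℝ, F n x
      = (Real.exp (αs * M₁ x + b n * M₂ x) - Real.exp (αs * M₁ x)) / (b n) := by
    intro x
    rw [hF, Real.exp_add]
    field_simp
  have hFint : ∫ x : ℝ, F n x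
      = ((∫ x : ℝ, Real.exp (αs * M₁ x + b n * M₂ x)) - Z) / (b n) := by
    rw [show (fun x => F n x) = fun x : ℝ =>
      (Real.exp (αs * M₁ x + b n * M₂ x) - Real.exp (αs * M₁ x)) / (b n) from funext hFeq]
    rw [integral_div, integral_sub hIcomb hZint]
  rw [hFint] at hn
  rw [lt_div_iff_of_neg (hb n)] at hn
  have := Real.add_one_le_exp (b n * R₂)
  nlinarith [Real.exp_pos (b n * R₂)]


lemma pi_exp_integrable {g : ℝ → ℝ} (hg : Integrable (fun y : ℝ => Real.exp (g y))) (d : ℕ) :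
    Integrable (fun x : Fin d → ℝ => Real.exp (∑ i, g (x i))) := by
  have hrw : (fun x : Fin d → ℝ => Real.exp (∑ i, g (x i)))
      = fun x => ∏ i : Fin d, Real.exp (g (x i)) := by
    funext x; rw [Real.exp_sum]
  rw [hrw]
  exact Integrable.fintype_prod (f := fun _ : Fin d => fun y : ℝ => Real.exp (g y))
    (fun _ => hg)

lemma pi_exp_integral (g : ℝ → ℝ) (d : ℕ) :
    ∫ x : Fin d → ℝ, Real.exp (∑ i, g (x i)) = (∫ y : ℝ, Real.exp (g y)) ^ d := by
  have hrw : (fun x : Fin d → ℝ => Real.exp (∑ i, g (x i)))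
      = fun x => ∏ i : Fin d, Real.exp (g (x i)) := by
    funext x; rw [Real.exp_sum]
  rw [hrw, MeasureTheory.volume_pi, MeasureTheory.integral_fintype_prod_eq_pow (ι := Fin d) (fun y : ℝ => Real.exp (g y)),
    Fintype.card_fin]

lemma meas_sum {M : ℝ → ℝ} (hM : IsOrlicz M) (d : ℕ) :
    Measurable (fun x : Fin d → ℝ => ∑ i, M (x i)) :=
  Finset.measurable_sum _ fun i _ => (orlicz_cont hM).measurable.comp (measurable_pi_apply i)

lemma meas_set {M : ℝ → ℝ} (hM : IsOrlicz M) (d : ℕ) (c : ℝ) :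
    MeasurableSet {x : Fin d → ℝ | ∑ i, M (x i) ≤ c} :=
  measurableSet_le (meas_sum hM d) measurable_const

lemma volume_orlicz_lt_top {M : ℝ → ℝ} (hM : IsOrlicz M) (d : ℕ) (c : ℝ) :
    volume {x : Fin d → ℝ | ∑ i, M (x i) ≤ c} < ⊤ := by
  set K := max 1 (c / M 1) with hK
  have hsub : {x : Fin d → ℝ | ∑ i, M (x i) ≤ c}
      ⊆ Set.pi Set.univ (fun _ : Fin d => Icc (-K) K) := by
    intro x hx
    rw [mem_setOf_eq] at hx
    intro i _
    have h1 : M (x i) ≤ c := by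
      have h2 := Finset.single_le_sum (f := fun j => M (x j))
        (fun j _ => orlicz_nonneg hM (x j)) (Finset.mem_univ i)
      linarith
    have h3 := orlicz_abs_le hM h1
    rw [← hK] at h3
    rw [mem_Icc]
    rw [abs_le] at h3
    exact ⟨h3.1, h3.2⟩
  refine lt_of_le_of_lt (measure_mono hsub) ?_
  rw [volume_pi_pi, Real.volume_Icc, Finset.prod_const]
  exact ENNReal.pow_lt_top ENNReal.ofReal_lt_top


end Stmt14Aux

open Stmt14Aux

set_option maxHeartbeats 4000000 in
theorem stmt14 (M₁ M₂ : ℝ → ℝ) (hM₁ : IsOrlicz M₁) (hM₂ : IsOrlicz M₂)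
    (R₁ R₂ : ℝ) (hR₁ : 0 < R₁) (hR₂ : 0 < R₂)
    (φ₁ : ℝ → ℝ) (hφ₁ : ∀ α, φ₁ α = Real.log (∫ x : ℝ, Real.exp (α * M₁ x)))
    (αs : ℝ) (hαs : αs < 0) (hder : deriv φ₁ αs = R₁)
    (hgt : ∫ x : ℝ, M₂ x * Real.exp (αs * M₁ x - φ₁ αs) > R₂) :
    Tendsto (fun d : ℕ =>
        (volume ({x : Fin d → ℝ | ∑ i, M₁ (x i) ≤ d * R₁}
            ∩ {x : Fin d → ℝ | ∑ i, M₂ (x i) ≤ d * R₂})).toReal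
          / (volume {x : Fin d → ℝ | ∑ i, M₁ (x i) ≤ d * R₁}).toReal)
      atTop (nhds 0) := by
  classical
  -- basic 1-d facts
  have hZint : ∀ t : ℝ, t < 0 → Integrable (fun x : ℝ => Real.exp (t * M₁ x)) :=
    fun t ht => integrable_exp_orlicz hM₁ ht
  have hZpos : ∀ t : ℝ, t < 0 → 0 < ∫ x : ℝ, Real.exp (t * M₁ x) :=
    fun t ht => MeasureTheory.integral_exp_pos (hZint t ht)
  have hφ : ∀ t : ℝ, t < 0 → Real.exp (φ₁ t) = ∫ x : ℝ, Real.exp (t * M₁ x) := by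
    intro t ht; rw [hφ₁ t, Real.exp_log (hZpos t ht)]
  -- derivative of φ₁ at αs
  have hdiff : DifferentiableAt ℝ φ₁ αs := by
    by_contra h
    rw [deriv_zero_of_not_differentiableAt h] at hder
    linarith
  have hDer : HasDerivAt φ₁ R₁ αs := by
    rw [← hder]; exact hdiff.hasDerivAt
  -- strict midpoint convexity of φ₁
  have hmidφ : ∀ s, s < αs → φ₁ ((s + αs) / 2) < (φ₁ s + φ₁ αs) / 2 := by
    intro s hs
    have hs0 : s < 0 := hs.trans hαs
    have hm0 : (s + αs) / 2 < 0 := by linarith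
    have hk := key_strict hM₁ hs hαs
    have h1 : Real.exp (2 * φ₁ ((s + αs) / 2))
        = (∫ x : ℝ, Real.exp (((s + αs) / 2) * M₁ x)) ^ 2 := by
      rw [two_mul, Real.exp_add, hφ _ hm0, sq]
    have h2 : Real.exp (φ₁ s + φ₁ αs)
        = (∫ x : ℝ, Real.exp (s * M₁ x)) * ∫ x : ℝ, Real.exp (αs * M₁ x) := by
      rw [Real.exp_add, hφ _ hs0, hφ _ hαs]
    rw [← h1, ← h2] at hk
    have h3 := Real.exp_lt_exp.1 hk
    linarith
  have hslope_le : ∀ x, x < αs → (φ₁ αs - φ₁ x) / (αs - x) ≤ R₁ :=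
    slope_le_of_midpoint φ₁ αs R₁ hDer (fun s hs => (hmidφ s hs).le)
  have hline : ∀ x, x < αs → φ₁ αs + (x - αs) * R₁ < φ₁ x :=
    line_lt_of_midpoint φ₁ αs R₁ hDer hmidφ
  -- Step U : find β
  have hIint : Integrable (fun x : ℝ => M₂ x * Real.exp (αs * M₁ x)) := by
    by_contra h
    have h2 : ¬ Integrable (fun x : ℝ => M₂ x * Real.exp (αs * M₁ x - φ₁ αs)) := by
      intro h3
      apply h
      have h4 : Integrable (fun x : ℝ =>
          M₂ x * Real.exp (αs * M₁ x - φ₁ αs) * Real.exp (φ₁ αs)) := h3.mul_const _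
      have h5 : (fun x : ℝ => M₂ x * Real.exp (αs * M₁ x - φ₁ αs) * Real.exp (φ₁ αs))
          = fun x : ℝ => M₂ x * Real.exp (αs * M₁ x) := by
        funext x; rw [Real.exp_sub]; field_simp
      rwa [h5] at h4
    rw [integral_undef h2] at hgt
    linarith
  have hI : R₂ * (∫ x : ℝ, Real.exp (αs * M₁ x)) < ∫ x : ℝ, M₂ x * Real.exp (αs * M₁ x) := by
    have h1 : (fun x : ℝ => M₂ x * Real.exp (αs * M₁ x - φ₁ αs))
        = fun x : ℝ => (M₂ x * Real.exp (αs * M₁ x)) / Real.exp (φ₁ αs) := by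
      funext x; rw [Real.exp_sub]; ring
    rw [gt_iff_lt, h1, integral_div, lt_div_iff₀ (Real.exp_pos _), hφ αs hαs] at hgt
    linarith [hgt]
  obtain ⟨β, hβ, hWlt⟩ := exists_beta hM₁ hM₂ hαs hR₂ hIint hI
  set W := ∫ x : ℝ, Real.exp (αs * M₁ x + β * M₂ x) with hWdef
  have hWpos : 0 < W := MeasureTheory.integral_exp_pos (integrable_exp_pair hM₁ hM₂ hαs hβ.le)
  set Λ := φ₁ αs - αs * R₁ with hΛ
  set u := W * Real.exp (-(αs * R₁ + β * R₂)) with hu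
  have hupos : 0 < u := by positivity
  set θ := u * Real.exp (-Λ) with hθ
  have hθpos : 0 < θ := by positivity
  have hθ1 : θ < 1 := by
    rw [hθ, hu, hΛ]
    have h2 : W * Real.exp (-(αs * R₁ + β * R₂)) * Real.exp (-(φ₁ αs - αs * R₁))
        = W / (Real.exp (β * R₂) * Real.exp (φ₁ αs)) := by
      rw [div_eq_mul_inv, ← Real.exp_add, ← Real.exp_neg, mul_assoc, ← Real.exp_add]
      congr 2; ring
    rw [h2, div_lt_one (by positivity)]
    rw [hφ αs hαs]
    exact hWlt
  have huθ : u = θ * Real.exp Λ := by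
    rw [hθ, mul_assoc, ← Real.exp_add, neg_add_cancel, Real.exp_zero, mul_one]
  clear_value W
  -- upper bound, each dimension
  have hup : ∀ d : ℕ, (volume ({x : Fin d → ℝ | ∑ i, M₁ (x i) ≤ d * R₁}
      ∩ {x : Fin d → ℝ | ∑ i, M₂ (x i) ≤ d * R₂})).toReal ≤ u ^ d := by
    intro d
    set Ad := {x : Fin d → ℝ | ∑ i, M₁ (x i) ≤ d * R₁} with hAd
    set Bd := {x : Fin d → ℝ | ∑ i, M₂ (x i) ≤ d * R₂} with hBd
    have hmA : MeasurableSet Ad := meas_set hM₁ d _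
    have hmB : MeasurableSet Bd := meas_set hM₂ d _
    have hfinA : volume Ad < ⊤ := volume_orlicz_lt_top hM₁ d _
    have hfinAB : volume (Ad ∩ Bd) ≠ ⊤ :=
      (lt_of_le_of_lt (measure_mono inter_subset_left) hfinA).ne
    set g : ℝ → ℝ := fun y => αs * M₁ y + β * M₂ y with hg
    have hgint : Integrable (fun y : ℝ => Real.exp (g y)) :=
      integrable_exp_pair hM₁ hM₂ hαs hβ.le
    set c0 : ℝ := d * (αs * R₁ + β * R₂) with hc0
    have hGint : Integrable (fun x : Fin d → ℝ => Real.exp ((∑ i, g (x i)) - c0)) := by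
      have h1 : (fun x : Fin d → ℝ => Real.exp ((∑ i, g (x i)) - c0))
          = fun x => Real.exp (∑ i, g (x i)) / Real.exp c0 := by
        funext x; rw [Real.exp_sub]
      rw [h1]
      exact (pi_exp_integrable hgint d).div_const _
    have key1 : 1 * (volume (Ad ∩ Bd)).toReal
        ≤ ∫ x in Ad ∩ Bd, Real.exp ((∑ i, g (x i)) - c0) := by
      refine setIntegral_ge_of_const_le_real (hmA.inter hmB) hfinAB ?_ hGint.integrableOn
      intro x hx
      obtain ⟨hxA, hxB⟩ := hx
      rw [hAd, mem_setOf_eq] at hxA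
      rw [hBd, mem_setOf_eq] at hxB
      rw [Real.one_le_exp_iff]
      have hsplit : ∑ i, g (x i) = αs * (∑ i, M₁ (x i)) + β * (∑ i, M₂ (x i)) := by
        rw [hg, Finset.sum_add_distrib, Finset.mul_sum, Finset.mul_sum]
      rw [hsplit, hc0]
      have h1 : αs * (↑d * R₁) ≤ αs * ∑ i, M₁ (x i) := mul_le_mul_of_nonpos_left hxA hαs.le
      have h2 : β * (↑d * R₂) ≤ β * ∑ i, M₂ (x i) := mul_le_mul_of_nonpos_left hxB hβ.le
      have h3 : (d : ℝ) * (αs * R₁ + β * R₂) = αs * (↑d * R₁) + β * (↑d * R₂) := by ring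
      linarith
    have key2 : ∫ x in Ad ∩ Bd, Real.exp ((∑ i, g (x i)) - c0)
        ≤ ∫ x : Fin d → ℝ, Real.exp ((∑ i, g (x i)) - c0) :=
      setIntegral_le_integral hGint (Filter.Eventually.of_forall fun x => (Real.exp_pos _).le)
    have key3 : ∫ x : Fin d → ℝ, Real.exp ((∑ i, g (x i)) - c0) = u ^ d := by
      have h1 : (fun x : Fin d → ℝ => Real.exp ((∑ i, g (x i)) - c0))
          = fun x => Real.exp (∑ i, g (x i)) / Real.exp c0 := by
        funext x; rw [Real.exp_sub]
      rw [h1, integral_div, pi_exp_integral g d, hu, mul_pow, ← hWdef]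
      rw [← Real.exp_nat_mul, hc0]
      rw [div_eq_mul_inv, ← Real.exp_neg]
      congr 2
      ring
    calc (volume (Ad ∩ Bd)).toReal = 1 * (volume (Ad ∩ Bd)).toReal := (one_mul _).symm
    _ ≤ ∫ x in Ad ∩ Bd, Real.exp ((∑ i, g (x i)) - c0) := key1
    _ ≤ ∫ x : Fin d → ℝ, Real.exp ((∑ i, g (x i)) - c0) := key2
    _ = u ^ d := key3
  -- parameters for the lower bound
  set δ := -Real.log θ / 2 with hδ
  have hlogθ : Real.log θ < 0 := Real.log_neg hθpos hθ1
  have hδpos : 0 < δ := by rw [hδ]; linarith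
  have hθf : θ * Real.exp δ < 1 := by
    have h1 : θ * Real.exp δ = Real.exp (Real.log θ + δ) := by
      rw [Real.exp_add, Real.exp_log hθpos]
    rw [h1, ← Real.exp_zero]
    apply Real.exp_lt_exp.2
    rw [hδ]; linarith
  have hθfpos : 0 ≤ θ * Real.exp δ := by positivity
  have h1αs : 0 < 1 - αs := by linarith
  set ε := δ / (2 * (1 - αs)) with hε
  have hεpos : 0 < ε := by rw [hε]; positivity
  clear_value u θ δ ε
  -- choose η
  obtain ⟨η, hη0, hη1, hηslope⟩ : ∃ η : ℝ, 0 < η ∧ η ≤ 1 ∧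
      (R₁ - ε / 2) * η < φ₁ αs - φ₁ (αs - η) := by
    have h2 := hasDerivAt_iff_tendsto_slope.1 hDer
    have hseq : Tendsto (fun n : ℕ => αs - 1 / (n + 1)) atTop (𝓝[≠] αs) := by
      apply tendsto_nhdsWithin_of_tendsto_nhds_of_eventually_within
      · have h3 : Tendsto (fun n : ℕ => αs - 1 / ((n : ℝ) + 1)) atTop (𝓝 (αs - 0)) :=
          tendsto_const_nhds.sub tendsto_one_div_add_atTop_nhds_zero_nat
        simpa using h3
      · refine Eventually.of_forall fun n => ?_
        have h4 : (0:ℝ) < 1 / ((n : ℝ) + 1) := by positivity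
        simp only [mem_compl_iff, mem_singleton_iff]
        intro hcon
        have : (1 : ℝ) / ((n : ℝ) + 1) = 0 := by linarith [sub_eq_self.1 hcon]
        linarith
    have h5 := (h2.comp hseq).eventually_const_lt (show R₁ - ε / 2 < R₁ by linarith)
    obtain ⟨n, hn⟩ := h5.exists
    have h4 : (0:ℝ) < 1 / ((n : ℝ) + 1) := by positivity
    refine ⟨1 / ((n : ℝ) + 1), h4, ?_, ?_⟩
    · rw [div_le_one (by positivity)]
      linarith [Nat.cast_nonneg (α := ℝ) n]
    · have h6 : slope φ₁ αs (αs - 1 / ((n : ℝ) + 1))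
          = (φ₁ αs - φ₁ (αs - 1 / ((n : ℝ) + 1))) / (1 / ((n : ℝ) + 1)) := by
        rw [slope_def_field]
        rw [show (αs - 1 / ((n : ℝ) + 1)) - αs = -(1 / ((n : ℝ) + 1)) by ring,
          div_neg, ← neg_div, neg_sub]
      have hn' : R₁ - ε / 2 < (φ₁ αs - φ₁ (αs - 1 / ((n : ℝ) + 1))) / (1 / ((n : ℝ) + 1)) := by
        have := hn
        rw [Function.comp_apply, h6] at this
        exact this
      rw [lt_div_iff₀ h4] at hn'
      exact hn'
  set α1 := αs - η with hα1
  set α := αs - η / 2 with hα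
  have hα1α : α1 < α := by rw [hα1, hα]; linarith
  have hααs : α < αs := by rw [hα]; linarith
  have hα0 : α < 0 := hααs.trans hαs
  have hα10 : α1 < 0 := by rw [hα1]; linarith
  have hstrictα := hline α hααs
  have hsα := hslope_le α hααs
  clear_value α1 α
  have hgap : (η / 2) * (R₁ - ε) < φ₁ α - φ₁ α1 := by
    have hpos2 : (0:ℝ) < αs - α := by rw [hα]; linarith
    rw [div_le_iff₀ hpos2] at hsα
    have h3 : αs - α = η / 2 := by rw [hα]; ring
    rw [h3] at hsα
    have h4 : φ₁ α1 = φ₁ (αs - η) := by rw [hα1]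
    rw [h4]
    linarith [hηslope, hsα]
  set A := Real.exp (φ₁ α - α * (R₁ - ε)) with hAdef
  set B := Real.exp (φ₁ α1 - α1 * (R₁ - ε)) with hBdef
  set C := Real.exp (Λ + α * ε) with hCdef
  have hApos : 0 < A := Real.exp_pos _
  have hBpos : 0 < B := Real.exp_pos _
  have hCpos : 0 < C := Real.exp_pos _
  clear_value A B C
  have hBA : B < A := by
    rw [hAdef, hBdef]
    apply Real.exp_lt_exp.2
    have h1 : α - α1 = η / 2 := by rw [hα, hα1]; ring
    have h2 : (α - α1) * (R₁ - ε) = (η / 2) * (R₁ - ε) := by rw [h1]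
    linarith [hgap, h2]
  have hCA : C < A := by
    rw [hAdef, hCdef, hΛ]
    apply Real.exp_lt_exp.2
    have h1 : (α - αs) * R₁ = α * R₁ - αs * R₁ := by ring
    have h2 : α * (R₁ - ε) = α * R₁ - α * ε := by ring
    linarith [hstrictα, h1, h2]
  have hAlow : Real.exp (Λ - δ / 2) ≤ A := by
    rw [hAdef]
    apply Real.exp_le_exp.2
    have h2 : -(δ / 2) ≤ α * ε := by
      have h3 : -α ≤ 1 - αs := by rw [hα]; linarith
      have h4 : (1 - αs) * ε = δ / 2 := by
        rw [hε]; field_simp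
      have h5 : (-α) * ε ≤ (1 - αs) * ε := mul_le_mul_of_nonneg_right h3 hεpos.le
      have h6 : (-α) * ε = -(α * ε) := by ring
      linarith [h5, h4, h6]
    rw [hΛ]
    have h7 : (α - αs) * R₁ = α * R₁ - αs * R₁ := by ring
    have h8 : α * (R₁ - ε) = α * R₁ - α * ε := by ring
    linarith [hstrictα, h7, h8]
  -- lower bound, each dimension
  have hlow : ∀ d : ℕ, A ^ d - B ^ d - C ^ d
      ≤ (volume {x : Fin d → ℝ | ∑ i, M₁ (x i) ≤ d * R₁}).toReal := by
    intro d
    set Ad := {x : Fin d → ℝ | ∑ i, M₁ (x i) ≤ ↑d * R₁} with hAd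
    have hmA : MeasurableSet Ad := meas_set hM₁ d _
    have hfinA : volume Ad < ⊤ := volume_orlicz_lt_top hM₁ d _
    set c1 : ℝ := ↑d * (R₁ - ε) with hc1
    set T := {x : Fin d → ℝ | c1 ≤ ∑ i, M₁ (x i)} with hT
    have hmT : MeasurableSet T := measurableSet_le measurable_const (meas_sum hM₁ d)
    have hrwt : ∀ t : ℝ, (fun x : Fin d → ℝ => Real.exp (t * ∑ i, M₁ (x i)))
        = fun x : Fin d → ℝ => Real.exp (∑ i, t * M₁ (x i)) := by
      intro t; funext x; rw [Finset.mul_sum]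
    have hIat : ∀ t : ℝ, t < 0 →
        Integrable (fun x : Fin d → ℝ => Real.exp (t * ∑ i, M₁ (x i))) := by
      intro t ht; rw [hrwt t]; exact pi_exp_integrable (integrable_exp_orlicz hM₁ ht) d
    have hIvt : ∀ t : ℝ, ∫ x : Fin d → ℝ, Real.exp (t * ∑ i, M₁ (x i))
        = (∫ y : ℝ, Real.exp (t * M₁ y)) ^ d := by
      intro t
      rw [hrwt t, pi_exp_integral (fun y : ℝ => t * M₁ y) d]
    have Iα := hIat α hα0
    have Iα1 := hIat α1 hα10
    have Iαs := hIat αs hαs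
    have split1 : (∫ x in T, Real.exp (α * ∑ i, M₁ (x i)))
        + (∫ x in Tᶜ, Real.exp (α * ∑ i, M₁ (x i)))
        = ∫ x : Fin d → ℝ, Real.exp (α * ∑ i, M₁ (x i)) := integral_add_compl hmT Iα
    have split2 : (∫ x in T ∩ Ad, Real.exp (α * ∑ i, M₁ (x i)))
        + (∫ x in T \ Ad, Real.exp (α * ∑ i, M₁ (x i)))
        = ∫ x in T, Real.exp (α * ∑ i, M₁ (x i)) := integral_inter_add_diff hmA Iα.integrableOn
    have hlowreg : ∫ x in Tᶜ, Real.exp (α * ∑ i, M₁ (x i))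
        ≤ Real.exp ((α - α1) * c1) * (∫ y : ℝ, Real.exp (α1 * M₁ y)) ^ d := by
      have hb : ∀ x ∈ Tᶜ, Real.exp (α * ∑ i, M₁ (x i))
          ≤ Real.exp ((α - α1) * c1) * Real.exp (α1 * ∑ i, M₁ (x i)) := by
        intro x hx
        rw [hT, mem_compl_iff, mem_setOf_eq, not_le] at hx
        rw [← Real.exp_add]
        apply Real.exp_le_exp.2
        have hαα1 : 0 < α - α1 := by rw [hα, hα1]; linarith
        have h := mul_le_mul_of_nonneg_left hx.le hαα1.le
        have h2 : (α - α1) * ∑ i, M₁ (x i) = α * ∑ i, M₁ (x i) - α1 * ∑ i, M₁ (x i) := by ring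
        linarith [h, h2]
      calc ∫ x in Tᶜ, Real.exp (α * ∑ i, M₁ (x i))
          ≤ ∫ x in Tᶜ, Real.exp ((α - α1) * c1) * Real.exp (α1 * ∑ i, M₁ (x i)) :=
            setIntegral_mono_on Iα.integrableOn ((Iα1.const_mul _).integrableOn) hmT.compl hb
        _ = Real.exp ((α - α1) * c1) * ∫ x in Tᶜ, Real.exp (α1 * ∑ i, M₁ (x i)) :=
            integral_const_mul _ _
        _ ≤ Real.exp ((α - α1) * c1) * ∫ x : Fin d → ℝ, Real.exp (α1 * ∑ i, M₁ (x i)) :=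
            mul_le_mul_of_nonneg_left (setIntegral_le_integral Iα1
              (Filter.Eventually.of_forall fun x => (Real.exp_pos _).le)) (Real.exp_pos _).le
        _ = _ := by rw [hIvt α1]
    have hhigh : ∫ x in T \ Ad, Real.exp (α * ∑ i, M₁ (x i))
        ≤ Real.exp ((α - αs) * (↑d * R₁)) * (∫ y : ℝ, Real.exp (αs * M₁ y)) ^ d := by
      have hb : ∀ x ∈ T \ Ad, Real.exp (α * ∑ i, M₁ (x i))
          ≤ Real.exp ((α - αs) * (↑d * R₁)) * Real.exp (αs * ∑ i, M₁ (x i)) := by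
        intro x hx
        obtain ⟨_, hx2⟩ := hx
        rw [hAd, mem_setOf_eq, not_le] at hx2
        rw [← Real.exp_add]
        apply Real.exp_le_exp.2
        have hααs' : α - αs < 0 := by linarith
        have h := mul_le_mul_of_nonpos_left hx2.le hααs'.le
        have h2 : (α - αs) * ∑ i, M₁ (x i) = α * ∑ i, M₁ (x i) - αs * ∑ i, M₁ (x i) := by ring
        linarith [h, h2]
      calc ∫ x in T \ Ad, Real.exp (α * ∑ i, M₁ (x i))
          ≤ ∫ x in T \ Ad, Real.exp ((α - αs) * (↑d * R₁)) * Real.exp (αs * ∑ i, M₁ (x i)) :=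
            setIntegral_mono_on Iα.integrableOn ((Iαs.const_mul _).integrableOn)
              (hmT.diff hmA) hb
        _ = Real.exp ((α - αs) * (↑d * R₁)) * ∫ x in T \ Ad, Real.exp (αs * ∑ i, M₁ (x i)) :=
            integral_const_mul _ _
        _ ≤ Real.exp ((α - αs) * (↑d * R₁)) * ∫ x : Fin d → ℝ, Real.exp (αs * ∑ i, M₁ (x i)) :=
            mul_le_mul_of_nonneg_left (setIntegral_le_integral Iαs
              (Filter.Eventually.of_forall fun x => (Real.exp_pos _).le)) (Real.exp_pos _).le
        _ = _ := by rw [hIvt αs]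
    have hshell : ∫ x in T ∩ Ad, Real.exp (α * ∑ i, M₁ (x i))
        ≤ Real.exp (α * c1) * (volume Ad).toReal := by
      have hfin2 : volume (T ∩ Ad) ≠ ⊤ :=
        (lt_of_le_of_lt (measure_mono inter_subset_right) hfinA).ne
      calc ∫ x in T ∩ Ad, Real.exp (α * ∑ i, M₁ (x i))
          ≤ ∫ _x in T ∩ Ad, Real.exp (α * c1) := by
            refine setIntegral_mono_on Iα.integrableOn
              (integrableOn_const hfin2) (hmT.inter hmA) ?_
            intro x hx
            obtain ⟨hx1, _⟩ := hx
            rw [hT, mem_setOf_eq] at hx1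
            apply Real.exp_le_exp.2
            exact mul_le_mul_of_nonpos_left hx1 hα0.le
        _ = (volume (T ∩ Ad)).toReal * Real.exp (α * c1) := by
            rw [setIntegral_const, smul_eq_mul, measureReal_def]
        _ ≤ Real.exp (α * c1) * (volume Ad).toReal := by
            rw [mul_comm]
            exact mul_le_mul_of_nonneg_left
              (ENNReal.toReal_mono hfinA.ne (measure_mono inter_subset_right))
              (Real.exp_pos _).le
    have hcomb : (∫ y : ℝ, Real.exp (α * M₁ y)) ^ d
        ≤ Real.exp ((α - α1) * c1) * (∫ y : ℝ, Real.exp (α1 * M₁ y)) ^ d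
          + Real.exp (α * c1) * (volume Ad).toReal
          + Real.exp ((α - αs) * (↑d * R₁)) * (∫ y : ℝ, Real.exp (αs * M₁ y)) ^ d := by
      rw [← hIvt α, ← split1, ← split2]
      linarith [hlowreg, hhigh, hshell]
    have eA : A ^ d * Real.exp (α * c1) = (∫ y : ℝ, Real.exp (α * M₁ y)) ^ d := by
      rw [hAdef, ← Real.exp_nat_mul, ← Real.exp_add, hc1,
        show (↑d * (φ₁ α - α * (R₁ - ε)) + α * (↑d * (R₁ - ε))) = (d : ℝ) * φ₁ α by ring,
        Real.exp_nat_mul, hφ α hα0]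
    have eB : B ^ d * Real.exp (α * c1)
        = Real.exp ((α - α1) * c1) * (∫ y : ℝ, Real.exp (α1 * M₁ y)) ^ d := by
      rw [hBdef, ← Real.exp_nat_mul, ← Real.exp_add, hc1, ← hφ α1 hα10,
        ← Real.exp_nat_mul, ← Real.exp_add]
      congr 1; ring
    have eC : C ^ d * Real.exp (α * c1)
        = Real.exp ((α - αs) * (↑d * R₁)) * (∫ y : ℝ, Real.exp (αs * M₁ y)) ^ d := by
      rw [hCdef, ← Real.exp_nat_mul, ← Real.exp_add, hc1, hΛ, ← hφ αs hαs,
        ← Real.exp_nat_mul, ← Real.exp_add]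
      congr 1; ring
    have hfinal : A ^ d * Real.exp (α * c1)
        ≤ (B ^ d + (volume Ad).toReal + C ^ d) * Real.exp (α * c1) := by
      rw [eA, add_mul, add_mul, eB, eC,
        mul_comm ((volume Ad).toReal) (Real.exp (α * c1))]
      exact hcomb
    have h9 := le_of_mul_le_mul_right hfinal (Real.exp_pos (α * c1))
    linarith
  -- eventual exponential lower bound on the volume
  have hev : ∀ᶠ d : ℕ in atTop, Real.exp ((d : ℝ) * (Λ - δ))
      ≤ (volume {x : Fin d → ℝ | ∑ i, M₁ (x i) ≤ d * R₁}).toReal := by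
    have hBA1 : B / A < 1 := (div_lt_one hApos).2 hBA
    have hCA1 : C / A < 1 := (div_lt_one hApos).2 hCA
    have e1 : Tendsto (fun d : ℕ => (B / A) ^ d) atTop (𝓝 0) :=
      tendsto_pow_atTop_nhds_zero_of_lt_one (div_nonneg hBpos.le hApos.le) hBA1
    have e2 : Tendsto (fun d : ℕ => (C / A) ^ d) atTop (𝓝 0) :=
      tendsto_pow_atTop_nhds_zero_of_lt_one (div_nonneg hCpos.le hApos.le) hCA1
    have e3 : Tendsto (fun d : ℕ => (Real.exp (δ / 2)) ^ d) atTop atTop :=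
      tendsto_pow_atTop_atTop_of_one_lt (Real.one_lt_exp_iff.2 (by linarith))
    filter_upwards [e1.eventually_lt_const (show (0:ℝ) < 1/4 by norm_num),
      e2.eventually_lt_const (show (0:ℝ) < 1/4 by norm_num),
      e3.eventually_ge_atTop 2] with d hd1 hd2 hd3
    have hApd : 0 < A ^ d := pow_pos hApos d
    have hBd : B ^ d < A ^ d / 4 := by
      rw [div_pow] at hd1
      rw [div_lt_iff₀ hApd] at hd1
      linarith [hd1]
    have hCd : C ^ d < A ^ d / 4 := by
      rw [div_pow] at hd2
      rw [div_lt_iff₀ hApd] at hd2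
      linarith [hd2]
    have hAd2 : Real.exp ((d : ℝ) * (Λ - δ / 2)) ≤ A ^ d := by
      rw [Real.exp_nat_mul]
      exact pow_le_pow_left₀ (Real.exp_pos _).le hAlow d
    have hsplit : Real.exp ((d : ℝ) * (Λ - δ / 2))
        = Real.exp ((d : ℝ) * (Λ - δ)) * Real.exp (δ / 2) ^ d := by
      rw [← Real.exp_nat_mul, ← Real.exp_add]
      congr 1; ring
    have h2d : (2:ℝ) ≤ Real.exp (δ / 2) ^ d := hd3
    have hexpd : 0 < Real.exp ((d : ℝ) * (Λ - δ)) := Real.exp_pos _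
    have h6 : Real.exp ((d : ℝ) * (Λ - δ)) * 2
        ≤ Real.exp ((d : ℝ) * (Λ - δ)) * Real.exp (δ / 2) ^ d :=
      mul_le_mul_of_nonneg_left h2d hexpd.le
    have h7 : Real.exp ((d : ℝ) * (Λ - δ)) * Real.exp (δ / 2) ^ d ≤ A ^ d := by
      rw [← hsplit]; exact hAd2
    have : Real.exp ((d : ℝ) * (Λ - δ)) ≤ A ^ d - B ^ d - C ^ d := by
      linarith [h6, h7, hBd, hCd]
    exact this.trans (hlow d)
  -- squeeze
  apply squeeze_zero' (g := fun d : ℕ => (θ * Real.exp δ) ^ d)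
  · exact Filter.Eventually.of_forall fun d =>
      div_nonneg ENNReal.toReal_nonneg ENNReal.toReal_nonneg
  · filter_upwards [hev] with d hd
    have hden : 0 < Real.exp ((d : ℝ) * (Λ - δ)) := Real.exp_pos _
    have h1 : (volume ({x : Fin d → ℝ | ∑ i, M₁ (x i) ≤ d * R₁}
          ∩ {x : Fin d → ℝ | ∑ i, M₂ (x i) ≤ d * R₂})).toReal
          / (volume {x : Fin d → ℝ | ∑ i, M₁ (x i) ≤ d * R₁}).toReal
        ≤ u ^ d / Real.exp ((d : ℝ) * (Λ - δ)) :=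
      div_le_div₀ (by positivity) (hup d) hden hd
    have h2 : u ^ d / Real.exp ((d : ℝ) * (Λ - δ)) = (θ * Real.exp δ) ^ d := by
      rw [huθ, mul_pow, mul_pow, ← Real.exp_nat_mul, ← Real.exp_nat_mul,
        mul_div_assoc, ← Real.exp_sub]
      congr 2; ring
    rw [h2] at h1
    exact h1
  · exact tendsto_pow_atTop_nhds_zero_of_lt_one hθfpos hθf
end
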